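/- arXiv:1606.08184 — 8 statements merged into one kernel-verified Lean document; each statement's English description precedes it below -/
import Mathlib

section
/- For any two connected simple graphs G and H, the distinguishing number of the lexicographic product satisfies D(H) ≤ D(G[H]). -/
open SimpleGraph

/-- The lexicographic product of two simple graphs. -/
def lexProd {V W : Type*} (G : SimpleGraph V) (H : SimpleGraph W) :
    SimpleGraph (V × W) where
  Adj p q := G.Adj p.1 q.1 ∨ (p.1 = q.1 ∧ H.Adj p.2 q.2)
  symm := by
    constructor
    rintro p q (h | ⟨h1, h2⟩)
    · exact Or.inl h.symm
    · exact Or.inr ⟨h1.symm, h2.symm⟩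
  loopless := by
    constructor
    rintro p (h | ⟨_, h⟩)
    · exact G.irrefl h
    · exact H.irrefl h

/-- The distinguishing number: the least `d` such that there is a vertex labeling with `d`
labels preserved only by the identity automorphism. -/
noncomputable def distinguishingNumber {V : Type*} (G : SimpleGraph V) : ℕ :=
  sInf {d : ℕ | ∃ φ : V → Fin d,
    ∀ σ : G ≃g G, (∀ v, φ (σ v) = φ v) → ∀ v, σ v = v}

/-- The distinguishing index: the least `d` such that there is an edge labeling with `d`
labels preserved only by the identity automorphism. -/
noncomputable def distinguishingIndex {V : Type*} (G : SimpleGraph V) : ℕ :=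
  sInf {d : ℕ | ∃ ψ : G.edgeSet → Fin d,
    ∀ σ : G ≃g G, (∀ e, ψ (σ.mapEdgeSet e) = ψ e) → ∀ v, σ v = v}

/-- Every automorphism of `G[H]` is of wreath form, i.e. `Aut(G[H]) = Aut(G)[Aut(H)]`. -/
def wreathForm {V W : Type*} (G : SimpleGraph V) (H : SimpleGraph W) : Prop :=
  ∀ f : lexProd G H ≃g lexProd G H,
    ∃ (α : G ≃g G) (β : V → (H ≃g H)),
      ∀ p : V × W, f p = (α p.1, β (α p.1) p.2)

theorem stmt0 {V W : Type*} [Fintype V] [Fintype W]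
    (G : SimpleGraph V) (H : SimpleGraph W)
    (hG : G.Connected) (hH : H.Connected) :
    distinguishingNumber H ≤ distinguishingNumber (lexProd G H) := by
  classical
  obtain ⟨v₀⟩ := hG.nonempty
  have hne : {d : ℕ | ∃ φ : V × W → Fin d,
      ∀ σ : lexProd G H ≃g lexProd G H, (∀ v, φ (σ v) = φ v) → ∀ v, σ v = v}.Nonempty := by
    refine ⟨Fintype.card (V × W), Fintype.equivFin (V × W), ?_⟩
    intro σ h v
    exact (Fintype.equivFin (V × W)).injective (h v)
  obtain ⟨φ, hφ⟩ := Nat.sInf_mem hne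
  apply Nat.sInf_le
  refine ⟨fun w => φ (v₀, w), ?_⟩
  intro σ h w
  let f : lexProd G H ≃g lexProd G H :=
    { toEquiv := Equiv.prodShear (Equiv.refl V)
        (fun a => if a = v₀ then σ.toEquiv else Equiv.refl W)
      map_rel_iff' := by
        rintro ⟨a, x⟩ ⟨b, y⟩
        simp only [Equiv.prodShear_apply, Equiv.refl_apply]
        change (lexProd G H).Adj _ _ ↔ (lexProd G H).Adj _ _
        by_cases hab : a = b
        · subst hab
          by_cases ha : a = v₀ <;> simp [lexProd, ha, σ.map_rel_iff]
        · simp [lexProd, hab] }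
  have hfφ : ∀ p, φ (f p) = φ p := by
    rintro ⟨a, x⟩
    by_cases ha : a = v₀
    · subst ha; have hx := h x; unfold distinguishingNumber at hx; simpa [f, Equiv.prodShear] using hx
    · simp [f, Equiv.prodShear, ha]
  have hfix := hφ f hfφ (v₀, w)
  have : ((v₀ : V), σ w) = (v₀, w) := by
    simpa [f, Equiv.prodShear] using hfix
  exact (Prod.mk.injEq _ _ _ _ ▸ this).2
end

section
/- For any two connected simple graphs G and H, the distinguishing number of the lexicographic product satisfies D(G[H]) ≤ D(G)·D(H). -/
open SimpleGraph

lemma lexProd_adj {V W : Type*} {G : SimpleGraph V} {H : SimpleGraph W} {p q : V × W} :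
    (lexProd G H).Adj p q ↔ (G.Adj p.1 q.1 ∨ (p.1 = q.1 ∧ H.Adj p.2 q.2)) := Iff.rfl

/-- Auxiliary step: if `w` is adjacent to the fiber of `σ (v,x)` but not to that of
`σ (v,x')` (and is not that fiber), we get a contradiction. -/
lemma lex_aux {V W : Type*} [Finite W] {G : SimpleGraph V} {H : SimpleGraph W}
    (σ : lexProd G H ≃g lexProd G H) (v : V) (x x' : W) (w : V)
    (h1 : G.Adj w (σ (v, x)).1) (h2 : ¬ G.Adj w (σ (v, x')).1)
    (h3 : w ≠ (σ (v, x')).1) : False := by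
  have claim1 : ∀ z : W, (σ.symm (w, z)).1 = v := by
    intro z
    have ha : (lexProd G H).Adj (w, z) (σ (v, x)) := Or.inl h1
    have hr : (lexProd G H).Adj (σ.symm (w, z)) (v, x) := by
      have h := σ.symm.map_rel_iff.mpr ha
      rwa [σ.symm_apply_apply] at h
    have hnr : ¬ (lexProd G H).Adj (σ.symm (w, z)) (v, x') := by
      intro hc
      rw [← σ.symm_apply_apply (v, x')] at hc
      have h := σ.symm.map_rel_iff.mp hc
      rcases h with h | ⟨he, _⟩
      · exact h2 h
      · exact h3 he
    rcases hr with h | ⟨he, _⟩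
    · exact absurd (Or.inl h) hnr
    · exact he
  have hinj : Function.Injective fun z : W => (σ.symm (w, z)).2 := by
    intro z z' hzz
    have h4 : σ.symm (w, z) = σ.symm (w, z') := by
      have e1 := claim1 z
      have e2 := claim1 z'
      exact Prod.ext (e1.trans e2.symm) hzz
    have h5 := σ.symm.injective h4
    exact (Prod.ext_iff.mp h5).2
  obtain ⟨z, hz⟩ := (Finite.injective_iff_surjective.mp hinj) x
  have h5 : σ.symm (w, z) = (v, x) := Prod.ext (claim1 z) hz
  have h6 : (w, z) = σ (v, x) := by rw [← h5, σ.apply_symm_apply]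
  have h7 : w = (σ (v, x)).1 := congrArg Prod.fst h6
  rw [h7] at h1
  exact G.irrefl h1

/-- Key lemma: a label-preserving automorphism of the lexicographic product maps each
fiber `{v} × W` into a single fiber. -/
lemma lex_key {V W : Type*} [Finite W] {G : SimpleGraph V} {H : SimpleGraph W}
    (σ : lexProd G H ≃g lexProd G H) {m : ℕ} (φ : V → Fin m)
    (hφ : ∀ τ : G ≃g G, (∀ v, φ (τ v) = φ v) → ∀ v, τ v = v)
    (hfa : ∀ p : V × W, φ ((σ p).1) = φ p.1)
    (v : V) (x x' : W) : (σ (v, x)).1 = (σ (v, x')).1 := by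
  classical
  by_contra hne
  set u := (σ (v, x)).1 with hu
  set u' := (σ (v, x')).1 with hu'
  have htwin : ∀ w, w ≠ u → w ≠ u' → (G.Adj w u ↔ G.Adj w u') := by
    intro w hwu hwu'
    constructor
    · intro h; by_contra h'; exact lex_aux σ v x x' w h h' hwu'
    · intro h; by_contra h'; exact lex_aux σ v x' x w h h' hwu
  have hmono : ∀ s t, G.Adj s t → G.Adj (Equiv.swap u u' s) (Equiv.swap u u' t) := by
    intro s t hst
    rcases eq_or_ne s u with rfl | hsu
    · rcases eq_or_ne t u with rfl | htu
      · exact absurd rfl hst.ne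
      · rcases eq_or_ne t u' with rfl | htu'
        · rw [Equiv.swap_apply_left, Equiv.swap_apply_right]; exact hst.symm
        · rw [Equiv.swap_apply_left, Equiv.swap_apply_of_ne_of_ne htu htu']
          exact ((htwin t htu htu').mp hst.symm).symm
    · rcases eq_or_ne s u' with rfl | hsu'
      · rcases eq_or_ne t u with rfl | htu
        · rw [Equiv.swap_apply_right, Equiv.swap_apply_left]; exact hst.symm
        · rcases eq_or_ne t u' with rfl | htu'
          · exact absurd rfl hst.ne
          · rw [Equiv.swap_apply_right, Equiv.swap_apply_of_ne_of_ne htu htu']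
            exact ((htwin t htu htu').mpr hst.symm).symm
      · rw [Equiv.swap_apply_of_ne_of_ne hsu hsu']
        rcases eq_or_ne t u with rfl | htu
        · rw [Equiv.swap_apply_left]; exact (htwin s hsu hsu').mp hst
        · rcases eq_or_ne t u' with rfl | htu'
          · rw [Equiv.swap_apply_right]; exact (htwin s hsu hsu').mpr hst
          · rw [Equiv.swap_apply_of_ne_of_ne htu htu']; exact hst
  let τ : G ≃g G :=
    { toEquiv := Equiv.swap u u',
      map_rel_iff' := by
        intro s t
        constructor
        · intro h
          have h2 := hmono _ _ h
          rwa [Equiv.swap_apply_self, Equiv.swap_apply_self] at h2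
        · exact hmono s t }
  have hau : φ u = φ v := hfa (v, x)
  have hau' : φ u' = φ v := hfa (v, x')
  have hτφ : ∀ s, φ (τ s) = φ s := by
    intro s
    show φ (Equiv.swap u u' s) = φ s
    rcases eq_or_ne s u with rfl | hsu
    · rw [Equiv.swap_apply_left]; exact hau'.trans hau.symm
    · rcases eq_or_ne s u' with rfl | hsu'
      · rw [Equiv.swap_apply_right]; exact hau.trans hau'.symm
      · rw [Equiv.swap_apply_of_ne_of_ne hsu hsu']
  have hid := hφ τ hτφ u
  have h8 : u' = u := by
    have : τ u = Equiv.swap u u' u := rfl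
    rw [this, Equiv.swap_apply_left] at hid
    exact hid
  exact hne h8.symm

theorem stmt1 {V W : Type*} [Fintype V] [Fintype W]
    (G : SimpleGraph V) (H : SimpleGraph W)
    (hG : G.Connected) (hH : H.Connected) :
    distinguishingNumber (lexProd G H) ≤
      distinguishingNumber G * distinguishingNumber H := by
  classical
  have hVne : Nonempty V := hG.nonempty
  have hWne : Nonempty W := hH.nonempty
  have hGset : {d : ℕ | ∃ φ : V → Fin d,
      ∀ σ : G ≃g G, (∀ v, φ (σ v) = φ v) → ∀ v, σ v = v}.Nonempty :=
    ⟨Fintype.card V, ⟨Fintype.equivFin V, fun σ h v => (Fintype.equivFin V).injective (h v)⟩⟩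
  have hHset : {d : ℕ | ∃ ψ : W → Fin d,
      ∀ σ : H ≃g H, (∀ v, ψ (σ v) = ψ v) → ∀ v, σ v = v}.Nonempty :=
    ⟨Fintype.card W, ⟨Fintype.equivFin W, fun σ h v => (Fintype.equivFin W).injective (h v)⟩⟩
  obtain ⟨φ, hφ⟩ := Nat.sInf_mem hGset
  obtain ⟨ψ, hψ⟩ := Nat.sInf_mem hHset
  unfold distinguishingNumber
  apply Nat.sInf_le
  refine ⟨fun p => finProdFinEquiv (φ p.1, ψ p.2), ?_⟩
  intro σ hc
  have hpair : ∀ p : V × W, (φ ((σ p).1), ψ ((σ p).2)) = (φ p.1, ψ p.2) :=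
    fun p => finProdFinEquiv.injective (hc p)
  have hfa : ∀ p : V × W, φ ((σ p).1) = φ p.1 := fun p => (Prod.ext_iff.mp (hpair p)).1
  have hfb : ∀ p : V × W, ψ ((σ p).2) = ψ p.2 := fun p => (Prod.ext_iff.mp (hpair p)).2
  have hfa' : ∀ p : V × W, φ ((σ.symm p).1) = φ p.1 := by
    intro p
    have h := hfa (σ.symm p)
    rw [σ.apply_symm_apply] at h
    exact h.symm
  obtain ⟨w₀⟩ := hWne
  have fib := lex_key σ φ hφ hfa
  have fib' := lex_key σ.symm φ hφ hfa'
  set α : V → V := fun v => (σ (v, w₀)).1 with hα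
  set α' : V → V := fun v => (σ.symm (v, w₀)).1 with hα'
  have hσ1 : ∀ p : V × W, (σ p).1 = α p.1 := by rintro ⟨v, y⟩; exact fib v y w₀
  have hσ'1 : ∀ p : V × W, (σ.symm p).1 = α' p.1 := by rintro ⟨v, y⟩; exact fib' v y w₀
  have hli : ∀ v, α' (α v) = v := by
    intro v
    have h2 : (σ.symm (σ (v, w₀))).1 = v := by rw [σ.symm_apply_apply]
    rw [hσ'1 (σ (v, w₀))] at h2
    exact h2
  have hri : ∀ v, α (α' v) = v := by
    intro v
    have h2 : (σ (σ.symm (v, w₀))).1 = v := by rw [σ.apply_symm_apply]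
    rw [hσ1 (σ.symm (v, w₀))] at h2
    exact h2
  have hmono : ∀ s t, G.Adj s t → G.Adj (α s) (α t) := by
    intro s t h
    have h2 : (lexProd G H).Adj (σ (s, w₀)) (σ (t, w₀)) := σ.map_rel_iff.mpr (Or.inl h)
    rcases h2 with h2 | ⟨he, _⟩
    · rw [hσ1 (s, w₀), hσ1 (t, w₀)] at h2; exact h2
    · exfalso
      rw [hσ1 (s, w₀), hσ1 (t, w₀)] at he
      have h3 := congrArg α' he
      rw [hli, hli] at h3
      exact h.ne h3
  have hmono' : ∀ s t, G.Adj s t → G.Adj (α' s) (α' t) := by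
    intro s t h
    have h2 : (lexProd G H).Adj (σ.symm (s, w₀)) (σ.symm (t, w₀)) :=
      σ.symm.map_rel_iff.mpr (Or.inl h)
    rcases h2 with h2 | ⟨he, _⟩
    · rw [hσ'1 (s, w₀), hσ'1 (t, w₀)] at h2; exact h2
    · exfalso
      rw [hσ'1 (s, w₀), hσ'1 (t, w₀)] at he
      have h3 := congrArg α he
      rw [hri, hri] at h3
      exact h.ne h3
  let αIso : G ≃g G :=
    { toEquiv := ⟨α, α', hli, hri⟩,
      map_rel_iff' := by
        intro s t
        show G.Adj (α s) (α t) ↔ G.Adj s t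
        constructor
        · intro h
          have h2 := hmono' _ _ h
          rw [hli, hli] at h2
          exact h2
        · exact hmono s t }
  have hαid : ∀ v, α v = v := hφ αIso (fun v => hfa (v, w₀))
  have hα'id : ∀ v, α' v = v := by
    intro v
    have h := hli v
    rwa [hαid v] at h
  have hfirst : ∀ p : V × W, (σ p).1 = p.1 := fun p => (hσ1 p).trans (hαid p.1)
  have hfirst' : ∀ p : V × W, (σ.symm p).1 = p.1 := fun p => (hσ'1 p).trans (hα'id p.1)
  rintro ⟨v, x⟩
  set β : W → W := fun y => (σ (v, y)).2 with hβ
  set β' : W → W := fun y => (σ.symm (v, y)).2 with hβ'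
  have hσ2 : ∀ y, σ (v, y) = (v, β y) := by
    intro y
    exact Prod.ext (hfirst (v, y)) rfl
  have hσ'2 : ∀ y, σ.symm (v, y) = (v, β' y) := by
    intro y
    exact Prod.ext (hfirst' (v, y)) rfl
  have hliβ : ∀ y, β' (β y) = y := by
    intro y
    have h1 : σ.symm (v, β y) = (v, y) := by rw [← hσ2 y, σ.symm_apply_apply]
    exact congrArg Prod.snd h1
  have hriβ : ∀ y, β (β' y) = y := by
    intro y
    have h1 : σ (v, β' y) = (v, y) := by rw [← hσ'2 y, σ.apply_symm_apply]
    exact congrArg Prod.snd h1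
  have hmonoβ : ∀ s t, H.Adj s t → H.Adj (β s) (β t) := by
    intro s t h
    have h2 : (lexProd G H).Adj (σ (v, s)) (σ (v, t)) := σ.map_rel_iff.mpr (Or.inr ⟨rfl, h⟩)
    rw [hσ2 s, hσ2 t] at h2
    rcases h2 with h2 | ⟨_, h2⟩
    · exact absurd h2 G.irrefl
    · exact h2
  have hmonoβ' : ∀ s t, H.Adj s t → H.Adj (β' s) (β' t) := by
    intro s t h
    have h2 : (lexProd G H).Adj (σ.symm (v, s)) (σ.symm (v, t)) :=
      σ.symm.map_rel_iff.mpr (Or.inr ⟨rfl, h⟩)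
    rw [hσ'2 s, hσ'2 t] at h2
    rcases h2 with h2 | ⟨_, h2⟩
    · exact absurd h2 G.irrefl
    · exact h2
  let βIso : H ≃g H :=
    { toEquiv := ⟨β, β', hliβ, hriβ⟩,
      map_rel_iff' := by
        intro s t
        show H.Adj (β s) (β t) ↔ H.Adj s t
        constructor
        · intro h
          have h2 := hmonoβ' _ _ h
          rw [hliβ, hliβ] at h2
          exact h2
        · exact hmonoβ s t }
  have hβid : ∀ y, β y = y := hψ βIso (fun y => hfb (v, y))
  rw [hσ2 x, hβid x]
end

section
/- Let G and H be connected simple graphs such that every automorphism of G[H] is of wreath form. Define y_0 = 1, y_1 = D(H), and for m ≥ 2, y_m = D(H) + Σ_{i=1}^{m−1} C(m−1, i)·C(D(H), i+1), and let M = min{ k : Σ_{m=0}^{k} y_m ≥ D(G) }. Then D(H) ≤ D(G[H]) ≤ D(H) + M. -/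
open SimpleGraph

/-- The sequence `y_m` from the theorem: `y_0 = 1`, `y_1 = D(H)`, and for `m ≥ 2`,
`y_m = D(H) + Σ_{i=1}^{m-1} C(m-1,i) C(D(H), i+1)`, where `DH` stands for `D(H)`. -/
def yFun (DH : ℕ) : ℕ → ℕ
  | 0 => 1
  | 1 => DH
  | (n+2) => DH + ∑ i ∈ Finset.Icc 1 (n+1), Nat.choose (n+1) i * Nat.choose DH (i+1)


section Iota
variable {D M : ℕ}

/-- the replacement injection determined by `S, T`. -/
noncomputable def iotaST (S : Finset (Fin D)) (T : Finset (Fin M)) (h : S.card = T.card) :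
    Fin D → Fin (D + M) := fun j =>
  if hj : j ∈ S then Fin.natAdd D ((T.equivFin.symm (finCongr h (S.equivFin ⟨j, hj⟩))) : Fin M)
  else Fin.castAdd M j

lemma iotaST_injective (S : Finset (Fin D)) (T : Finset (Fin M)) (h : S.card = T.card) :
    Function.Injective (iotaST S T h) := by
  intro a b hab
  unfold iotaST at hab
  by_cases ha : a ∈ S <;> by_cases hb : b ∈ S <;> simp [ha, hb] at hab
  · exact hab
  · have := congrArg Fin.val hab
    simp at this
    omega
  · have := congrArg Fin.val hab
    simp at this
    omega
  · exact Fin.ext (by simpa using congrArg Fin.val hab)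

lemma castAdd_mem_range_iotaST {S : Finset (Fin D)} {T : Finset (Fin M)} {h : S.card = T.card}
    {j : Fin D} : (Fin.castAdd M j) ∈ Set.range (iotaST S T h) ↔ j ∉ S := by
  constructor
  · rintro ⟨j', hj'⟩ hjS
    unfold iotaST at hj'
    by_cases hj2 : j' ∈ S
    · simp [hj2] at hj'
      have := congrArg Fin.val hj'
      simp at this
      omega
    · simp [hj2] at hj'
      have : j' = j := Fin.ext (by simpa using congrArg Fin.val hj')
      exact (this ▸ hj2) hjS
  · intro hjn
    exact ⟨j, by simp [iotaST, hjn]⟩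

lemma natAdd_mem_range_iotaST {S : Finset (Fin D)} {T : Finset (Fin M)} {h : S.card = T.card}
    {t : Fin M} : (Fin.natAdd D t) ∈ Set.range (iotaST S T h) ↔ t ∈ T := by
  constructor
  · rintro ⟨j, hj⟩
    unfold iotaST at hj
    by_cases hjS : j ∈ S
    · simp [hjS] at hj
      have := congrArg Fin.val hj
      have h2 : ((T.equivFin.symm (finCongr h (S.equivFin ⟨j, hjS⟩))) : Fin M) = t := Fin.ext this
      rw [← h2]
      exact (T.equivFin.symm _).2
    · simp [hjS] at hj
      have := congrArg Fin.val hj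
      simp at this
      omega
  · intro ht
    refine ⟨(S.equivFin.symm ((finCongr h).symm (T.equivFin ⟨t, ht⟩)) : Fin D), ?_⟩
    have hmem := (S.equivFin.symm ((finCongr h).symm (T.equivFin ⟨t, ht⟩))).2
    simp [iotaST, hmem]

lemma iotaST_range_determines {S S' : Finset (Fin D)} {T T' : Finset (Fin M)}
    {h : S.card = T.card} {h' : S'.card = T'.card}
    (hr : Set.range (iotaST S T h) = Set.range (iotaST S' T' h')) : S = S' ∧ T = T' := by
  constructor
  · ext j
    rw [← not_iff_not, ← castAdd_mem_range_iotaST (h := h), ← castAdd_mem_range_iotaST (h := h'), hr]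
  · ext t
    rw [← natAdd_mem_range_iotaST (h := h), ← natAdd_mem_range_iotaST (h := h'), hr]

lemma iotaST_key {W : Type*} (φ : W → Fin D) (hsurj : Function.Surjective φ) (β : W ≃ W)
    {S S' : Finset (Fin D)} {T T' : Finset (Fin M)}
    {h : S.card = T.card} {h' : S'.card = T'.card}
    (heq : ∀ w, iotaST S' T' h' (φ (β w)) = iotaST S T h (φ w)) : S = S' ∧ T = T' := by
  apply iotaST_range_determines (h := h) (h' := h')
  have h1 : Set.range (iotaST S T h ∘ φ) = Set.range (iotaST S T h) :=
    hsurj.range_comp _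
  have h2 : Set.range ((iotaST S' T' h' ∘ φ) ∘ β) = Set.range (iotaST S' T' h' ∘ φ) :=
    β.surjective.range_comp _
  have h3 : Set.range (iotaST S' T' h' ∘ φ) = Set.range (iotaST S' T' h') :=
    hsurj.range_comp _
  have h4 : iotaST S T h ∘ φ = (iotaST S' T' h' ∘ φ) ∘ β := funext fun w => (heq w).symm
  rw [← h1, h4, h2, h3]

end Iota

open Finset in
lemma yFun_succ_eq (D M : ℕ) :
    yFun D (M + 1) = ∑ i ∈ range D, Nat.choose D (i+1) * Nat.choose M i := by
  match M with
  | 0 =>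
    show D = _
    rcases Nat.eq_zero_or_pos D with hD | hD
    · subst hD; simp
    · rw [Finset.sum_eq_single_of_mem 0 (Finset.mem_range.2 hD)]
      · simp
      · intro i _ hi
        rw [Nat.choose_eq_zero_of_lt (show 0 < i by omega), mul_zero]
  | n + 1 =>
    show D + ∑ i ∈ Icc 1 (n+1), Nat.choose (n+1) i * Nat.choose D (i+1) = _
    -- extend RHS to a big range
    have hR : ∑ i ∈ range D, Nat.choose D (i+1) * Nat.choose (n+1) i
        = ∑ i ∈ range (D + n + 2), Nat.choose D (i+1) * Nat.choose (n+1) i := by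
      apply Finset.sum_subset
      · intro x hx; simp only [mem_range] at *; omega
      · intro x _ hx
        simp only [mem_range, not_lt] at hx
        rw [Nat.choose_eq_zero_of_lt (by omega), zero_mul]
    rw [hR, Finset.sum_range_succ' (fun i => Nat.choose D (i+1) * Nat.choose (n+1) i) (D + n + 1)]
    simp only [zero_add, Nat.choose_one_right, Nat.choose_zero_right, mul_one]
    rw [Nat.add_comm D]
    congr 1
    -- LHS inner sum over Icc 1 (n+1); RHS over range (D+n+1) of f(i+1)
    have hL : ∑ i ∈ Icc 1 (n+1), Nat.choose (n+1) i * Nat.choose D (i+1)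
        = ∑ i ∈ range (n+1), Nat.choose (n+1) (1+i) * Nat.choose D (1+i+1) := by
      rw [← Finset.Ico_add_one_right_eq_Icc, Finset.sum_Ico_eq_sum_range]
      norm_num
    rw [hL]
    have hL2 : ∑ i ∈ range (n+1), Nat.choose (n+1) (1+i) * Nat.choose D (1+i+1)
        = ∑ i ∈ range (D+n+1), Nat.choose (n+1) (1+i) * Nat.choose D (1+i+1) := by
      apply Finset.sum_subset
      · intro x hx; simp only [mem_range] at *; omega
      · intro x _ hx
        simp only [mem_range, not_lt] at hx
        rw [Nat.choose_eq_zero_of_lt (n := n+1) (by omega), zero_mul]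
    rw [hL2]
    apply Finset.sum_congr rfl
    intro i _
    rw [show 1 + i = i + 1 by omega, mul_comm]

open Finset in
lemma yFun_sum_eq (D : ℕ) : ∀ M, ∑ m ∈ range (M+1), yFun D m
    = ∑ s ∈ range (D+1), Nat.choose D s * Nat.choose M s := by
  intro M
  induction M with
  | zero =>
    rw [Finset.sum_range_one]
    show 1 = _
    rw [Finset.sum_eq_single_of_mem 0 (Finset.mem_range.2 (by omega))]
    · simp
    · intro i _ hi
      rw [Nat.choose_eq_zero_of_lt (n := 0) (by omega), mul_zero]
  | succ M ih =>
    rw [Finset.sum_range_succ, ih, yFun_succ_eq]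
    rw [Finset.sum_range_succ' (fun s => Nat.choose D s * Nat.choose (M+1) s) D,
        Finset.sum_range_succ' (fun s => Nat.choose D s * Nat.choose M s) D]
    simp only [Nat.choose_succ_succ, Nat.succ_eq_add_one, Nat.mul_add, Finset.sum_add_distrib,
      Nat.choose_zero_right, mul_one]
    ring


lemma card_pairs (D M : ℕ) :
    ∑ s ∈ Finset.range (D+1), Nat.choose D s * Nat.choose M s
      ≤ Fintype.card {p : Finset (Fin D) × Finset (Fin M) // p.1.card = p.2.card} := by
  classical
  have e := Equiv.subtypeProdEquivSigmaSubtype (fun (S : Finset (Fin D)) (T : Finset (Fin M)) => S.card = T.card)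
  rw [Fintype.card_congr e, Fintype.card_sigma]
  have hinner : ∀ S : Finset (Fin D),
      Fintype.card {T : Finset (Fin M) // S.card = T.card} = Nat.choose M S.card := by
    intro S
    rw [Fintype.card_subtype]
    have : (Finset.univ.filter fun T : Finset (Fin M) => S.card = T.card)
        = Finset.powersetCard S.card Finset.univ := by
      ext T
      simp [Finset.mem_powersetCard_univ, eq_comm]
    rw [this, Finset.card_powersetCard, Finset.card_univ, Fintype.card_fin]
  calc ∑ s ∈ Finset.range (D+1), Nat.choose D s * Nat.choose M s
      = ∑ S : Finset (Fin D), Nat.choose M S.card := by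
        rw [← Finset.sum_fiberwise_of_maps_to (g := fun S : Finset (Fin D) => S.card)
          (t := Finset.range (D+1)) (fun S _ => Finset.mem_range.2
            (Nat.lt_succ_of_le (S.card_le_univ.trans (by simp))))
          (fun S => Nat.choose M S.card)]
        apply Finset.sum_congr rfl
        intro s _
        have : ∀ S ∈ Finset.univ.filter (fun S : Finset (Fin D) => S.card = s),
            Nat.choose M S.card = Nat.choose M s := by
          intro S hS
          simp only [Finset.mem_filter] at hS
          rw [hS.2]
        rw [Finset.sum_congr rfl this, Finset.sum_const, smul_eq_mul]
        congr 1
        have : (Finset.univ.filter fun S : Finset (Fin D) => S.card = s)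
            = Finset.powersetCard s Finset.univ := by
          ext S; simp [Finset.mem_powersetCard_univ]
        rw [this, Finset.card_powersetCard, Finset.card_univ, Fintype.card_fin]
    _ = ∑ S : Finset (Fin D), Fintype.card {T : Finset (Fin M) // S.card = T.card} := by
        apply Finset.sum_congr rfl; intro S _; rw [hinner]
    _ ≤ _ := le_rfl

/-- A minimal distinguishing coloring exists. -/
lemma exists_min_coloring {V : Type*} [Fintype V] (G : SimpleGraph V) :
    ∃ φ : V → Fin (distinguishingNumber G),
      ∀ σ : G ≃g G, (∀ v, φ (σ v) = φ v) → ∀ v, σ v = v := by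
  have hne : {d : ℕ | ∃ φ : V → Fin d,
      ∀ σ : G ≃g G, (∀ v, φ (σ v) = φ v) → ∀ v, σ v = v}.Nonempty :=
    ⟨Fintype.card V, (Fintype.equivFin V : V → Fin (Fintype.card V)),
      fun σ h v => (Fintype.equivFin V).injective (h v)⟩
  exact Nat.sInf_mem hne

lemma distinguishingNumber_le {V : Type*} (G : SimpleGraph V) {d : ℕ} (φ : V → Fin d)
    (hφ : ∀ σ : G ≃g G, (∀ v, φ (σ v) = φ v) → ∀ v, σ v = v) :
    distinguishingNumber G ≤ d :=
  Nat.sInf_le ⟨φ, hφ⟩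

/-- There is a surjective minimal distinguishing coloring. -/
lemma exists_surj_min_coloring {W : Type*} [Fintype W] (H : SimpleGraph W) :
    ∃ φ : W → Fin (distinguishingNumber H), Function.Surjective φ ∧
      ∀ σ : H ≃g H, (∀ v, φ (σ v) = φ v) → ∀ v, σ v = v := by
  classical
  obtain ⟨φ₀, hφ₀⟩ := exists_min_coloring H
  set R : Finset (Fin (distinguishingNumber H)) := Finset.image φ₀ Finset.univ with hR
  have hmem : ∀ w, φ₀ w ∈ R := fun w => Finset.mem_image_of_mem φ₀ (Finset.mem_univ w)
  set ψ : W → Fin R.card := fun w => R.equivFin ⟨φ₀ w, hmem w⟩ with hψ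
  have hψd : ∀ σ : H ≃g H, (∀ v, ψ (σ v) = ψ v) → ∀ v, σ v = v := by
    intro σ hpres
    apply hφ₀ σ
    intro v
    have := R.equivFin.injective (hpres v)
    exact congrArg Subtype.val this
  have h1 : distinguishingNumber H ≤ R.card := distinguishingNumber_le H ψ hψd
  have h2 : R.card ≤ distinguishingNumber H := by
    simpa using R.card_le_univ
  have hcard : R.card = distinguishingNumber H := le_antisymm h2 h1
  refine ⟨fun w => Fin.cast hcard (ψ w), ?_, ?_⟩
  · intro y
    set c := R.equivFin.symm (Fin.cast hcard.symm y) with hc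
    obtain ⟨w, -, hw⟩ := Finset.mem_image.1 c.2
    refine ⟨w, ?_⟩
    have hsub : (⟨φ₀ w, hmem w⟩ : {x // x ∈ R}) = c := Subtype.ext hw
    show Fin.cast hcard (R.equivFin ⟨φ₀ w, hmem w⟩) = y
    rw [hsub, hc, Equiv.apply_symm_apply]
    exact Fin.ext rfl
  · intro σ hpres v
    apply hψd σ _ v
    intro v'
    have := hpres v'
    exact Fin.cast_injective _ this

/-- The automorphism of `G[H]` acting as `σ` on the fiber over `g0` and identity elsewhere. -/
def fiberAut {V W : Type*} [DecidableEq V] (G : SimpleGraph V) (H : SimpleGraph W)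
    (g0 : V) (σ : H ≃g H) : lexProd G H ≃g lexProd G H where
  toFun p := (p.1, if p.1 = g0 then σ p.2 else p.2)
  invFun p := (p.1, if p.1 = g0 then σ.symm p.2 else p.2)
  left_inv p := by
    obtain ⟨a, b⟩ := p
    by_cases h : a = g0 <;> simp [h]
  right_inv p := by
    obtain ⟨a, b⟩ := p
    by_cases h : a = g0 <;> simp [h]
  map_rel_iff' := by
    intro p q
    show G.Adj p.1 q.1 ∨ (p.1 = q.1 ∧ H.Adj _ _) ↔ G.Adj p.1 q.1 ∨ (p.1 = q.1 ∧ H.Adj p.2 q.2)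
    by_cases hpq : p.1 = q.1
    · by_cases hp : p.1 = g0
      · have hq : q.1 = g0 := hpq ▸ hp
        simp [hp, hq, σ.map_rel_iff]
      · have hq : ¬ q.1 = g0 := fun h => hp (hpq.trans h)
        simp [hp, hq]
    · simp [hpq]

theorem stmt2 {V W : Type*} [Fintype V] [Fintype W]
    (G : SimpleGraph V) (H : SimpleGraph W)
    (hG : G.Connected) (hH : H.Connected) (hw : wreathForm G H) :
    distinguishingNumber H ≤ distinguishingNumber (lexProd G H) ∧
    distinguishingNumber (lexProd G H) ≤ distinguishingNumber H +
      sInf {k : ℕ | distinguishingNumber G ≤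
        ∑ m ∈ Finset.range (k + 1), yFun (distinguishingNumber H) m} := by
  classical
  set D := distinguishingNumber H with hD
  set DG := distinguishingNumber G with hDGdef
  obtain ⟨φH, hφHsurj, hφH⟩ := exists_surj_min_coloring H
  obtain ⟨φG, hφG⟩ := exists_min_coloring G
  constructor
  · -- lower bound
    obtain ⟨g0⟩ := hG.nonempty
    obtain ⟨φL, hφL⟩ := exists_min_coloring (lexProd G H)
    apply distinguishingNumber_le H (fun h => φL (g0, h))
    intro σ hpres v
    have hf : ∀ p, φL ((fiberAut G H g0 σ) p) = φL p := by
      rintro ⟨a, b⟩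
      by_cases h : a = g0
      · have h2 : (fiberAut G H g0 σ) (a, b) = (a, σ b) := by simp [fiberAut, h]
        rw [h2, h]; exact hpres b
      · have h2 : (fiberAut G H g0 σ) (a, b) = (a, b) := by simp [fiberAut, h]
        rw [h2]
    have h3 := hφL (fiberAut G H g0 σ) hf (g0, v)
    have h4 : ((g0 : V), σ v) = ((g0 : V), v) := by
      simpa [fiberAut] using h3
    exact (Prod.ext_iff.1 h4).2
  · -- upper bound
    set Mk := sInf {k : ℕ | DG ≤ ∑ m ∈ Finset.range (k + 1), yFun D m} with hMk
    have hW : Nonempty W := hH.nonempty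
    have hD1 : 1 ≤ D := (φH hW.some).pos
    have hMne : {k : ℕ | DG ≤ ∑ m ∈ Finset.range (k + 1), yFun D m}.Nonempty := by
      refine ⟨DG, ?_⟩
      have h1 : ∀ m ∈ Finset.range (DG + 1), 1 ≤ yFun D m := by
        intro m _
        match m with
        | 0 => exact le_refl 1
        | 1 => exact hD1
        | (n+2) => exact le_trans hD1 (Nat.le_add_right _ _)
      calc DG ≤ DG + 1 := Nat.le_succ _
        _ = ∑ _m ∈ Finset.range (DG+1), 1 := by simp
        _ ≤ _ := Finset.sum_le_sum h1
    have hMmem : DG ≤ ∑ m ∈ Finset.range (Mk + 1), yFun D m := Nat.sInf_mem hMne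
    have hcard : DG ≤
        Fintype.card {p : Finset (Fin D) × Finset (Fin Mk) // p.1.card = p.2.card} := by
      calc DG ≤ ∑ m ∈ Finset.range (Mk+1), yFun D m := hMmem
        _ = ∑ s ∈ Finset.range (D+1), Nat.choose D s * Nat.choose Mk s := yFun_sum_eq D Mk
        _ ≤ _ := card_pairs D Mk
    obtain ⟨e⟩ := Function.Embedding.nonempty_of_card_le (α := Fin DG)
      (β := {p : Finset (Fin D) × Finset (Fin Mk) // p.1.card = p.2.card})
      (by simpa using hcard)
    set Φ : V × W → Fin (D + Mk) := fun p =>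
      iotaST (e (φG p.1)).1.1 (e (φG p.1)).1.2 (e (φG p.1)).2 (φH p.2) with hΦ
    apply distinguishingNumber_le (lexProd G H) Φ
    intro σ hpres p
    obtain ⟨α, β, hσ⟩ := hw σ
    have key : ∀ g, φG (α g) = φG g := by
      intro g
      have h1 : ∀ w : W,
          iotaST (e (φG (α g))).1.1 (e (φG (α g))).1.2 (e (φG (α g))).2 (φH ((β (α g)) w))
            = iotaST (e (φG g)).1.1 (e (φG g)).1.2 (e (φG g)).2 (φH w) := by
        intro w
        have h2 := hpres (g, w)
        rw [hσ (g, w)] at h2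
        simp only [hΦ] at h2
        exact h2
      obtain ⟨hS, hT⟩ := iotaST_key φH hφHsurj (β (α g)).toEquiv h1
      exact (e.injective (Subtype.ext (Prod.ext hS hT))).symm
    have hα : ∀ g, α g = g := hφG α key
    have hβ : ∀ g w, (β g) w = w := by
      intro g
      apply hφH (β g)
      intro w
      have h2 := hpres (g, w)
      rw [hσ (g, w), hα g] at h2
      simp only [hΦ] at h2
      exact iotaST_injective _ _ _ h2
    rw [hσ p, hα p.1, hβ p.1 p.2]
end

section
/- For every n ≥ 3, the distinguishing number of the spider graph G_n equals ⌈√n⌉. -/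
open SimpleGraph

/-- The spider graph: the star `K_{1,n}` with every edge subdivided. -/
def spider (n : ℕ) : SimpleGraph (Unit ⊕ Fin n ⊕ Fin n) :=
  SimpleGraph.fromRel (fun a b =>
    (∃ i : Fin n, a = Sum.inl () ∧ b = Sum.inr (Sum.inl i)) ∨
    (∃ i : Fin n, a = Sum.inr (Sum.inl i) ∧ b = Sum.inr (Sum.inr i)))

lemma adj_c (n : ℕ) (x) : (spider n).Adj (.inl ()) x ↔ ∃ i, x = .inr (.inl i) := by
  rcases x with _ | (i | i) <;> simp [spider, SimpleGraph.fromRel_adj]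

lemma adj_m (n : ℕ) (i : Fin n) (x) :
    (spider n).Adj (.inr (.inl i)) x ↔ x = .inl () ∨ x = .inr (.inr i) := by
  rcases x with _ | (j | j) <;> simp [spider, SimpleGraph.fromRel_adj, eq_comm]

lemma adj_l (n : ℕ) (i : Fin n) (x) :
    (spider n).Adj (.inr (.inr i)) x ↔ x = .inr (.inl i) := by
  rcases x with _ | (j | j) <;> simp [spider, SimpleGraph.fromRel_adj, eq_comm]

lemma spider_aut_struct (n : ℕ) (hn : 3 ≤ n) (σ : spider n ≃g spider n) :
    σ (.inl ()) = .inl () ∧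
    ∀ i : Fin n, ∃ j : Fin n, σ (.inr (.inl i)) = .inr (.inl j) ∧
      σ (.inr (.inr i)) = .inr (.inr j) := by
  have hadj : ∀ a b, (spider n).Adj a b → (spider n).Adj (σ a) (σ b) :=
    fun a b h => σ.map_rel_iff.mpr h
  have hc : σ (.inl ()) = .inl () := by
    set v := σ (Sum.inl () : Unit ⊕ Fin n ⊕ Fin n) with hv
    have hm : ∀ k : Fin n, (spider n).Adj v (σ (.inr (.inl k))) := by
      intro k
      exact hadj _ _ ((adj_c n _).2 ⟨k, rfl⟩)
    have h01 : (⟨0, by omega⟩ : Fin n) ≠ ⟨1, by omega⟩ := by simp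
    have h02 : (⟨0, by omega⟩ : Fin n) ≠ ⟨2, by omega⟩ := by simp
    have h12 : (⟨1, by omega⟩ : Fin n) ≠ ⟨2, by omega⟩ := by simp
    rcases hv' : v with _ | (j | j)
    · rfl
    · have h0 := (adj_m n j _).1 (hv' ▸ hm ⟨0, by omega⟩)
      have h1 := (adj_m n j _).1 (hv' ▸ hm ⟨1, by omega⟩)
      have h2 := (adj_m n j _).1 (hv' ▸ hm ⟨2, by omega⟩)
      exfalso
      rcases h0 with h0 | h0 <;> rcases h1 with h1 | h1 <;> rcases h2 with h2 | h2
      · exact h01 (by simpa using σ.injective (h0.trans h1.symm))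
      · exact h01 (by simpa using σ.injective (h0.trans h1.symm))
      · exact h02 (by simpa using σ.injective (h0.trans h2.symm))
      · exact h12 (by simpa using σ.injective (h1.trans h2.symm))
      · exact h12 (by simpa using σ.injective (h1.trans h2.symm))
      · exact h02 (by simpa using σ.injective (h0.trans h2.symm))
      · exact h01 (by simpa using σ.injective (h0.trans h1.symm))
      · exact h01 (by simpa using σ.injective (h0.trans h1.symm))
    · have h0 := (adj_l n j _).1 (hv' ▸ hm ⟨0, by omega⟩)
      have h1 := (adj_l n j _).1 (hv' ▸ hm ⟨1, by omega⟩)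
      exact absurd (by simpa using σ.injective (h0.trans h1.symm)) h01
  refine ⟨hc, fun i => ?_⟩
  have hmi : (spider n).Adj (σ (.inl ())) (σ (.inr (.inl i))) :=
    hadj _ _ ((adj_c n _).2 ⟨i, rfl⟩)
  rw [hc] at hmi
  obtain ⟨j, hj⟩ := (adj_c n _).1 hmi
  refine ⟨j, hj, ?_⟩
  have hli : (spider n).Adj (σ (.inr (.inl i))) (σ (.inr (.inr i))) :=
    hadj _ _ ((adj_m n i _).2 (Or.inr rfl))
  rw [hj] at hli
  rcases (adj_m n j _).1 hli with h | h
  · exfalso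
    have := σ.injective (h.trans hc.symm)
    simp at this
  · exact h

def spiderAut (n : ℕ) (π : Equiv.Perm (Fin n)) : spider n ≃g spider n where
  toEquiv := Equiv.sumCongr (Equiv.refl Unit) (Equiv.sumCongr π π)
  map_rel_iff' := by
    rintro (⟨⟩ | (i | i)) (⟨⟩ | (j | j)) <;>
      simp [spider, SimpleGraph.fromRel_adj, π.injective.eq_iff]


theorem stmt3 (n : ℕ) (hn : 3 ≤ n) :
    distinguishingNumber (spider n) = sInf {r : ℕ | n ≤ r ^ 2} := by
  set d := sInf {r : ℕ | n ≤ r ^ 2} with hd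
  have hne : (Set.Nonempty {r : ℕ | n ≤ r ^ 2}) :=
    ⟨n, by simpa [pow_two] using Nat.le_mul_of_pos_left n (by omega)⟩
  have hd2 : n ≤ d ^ 2 := Nat.sInf_mem hne
  have hd0 : 0 < d := by
    rcases Nat.eq_zero_or_pos d with h | h
    · rw [h] at hd2; simp at hd2; omega
    · exact h
  -- upper bound: d is a distinguishing number of labels
  have hdS : d ∈ {e : ℕ | ∃ φ : (Unit ⊕ Fin n ⊕ Fin n) → Fin e,
      ∀ σ : spider n ≃g spider n, (∀ v, φ (σ v) = φ v) → ∀ v, σ v = v} := by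
    obtain ⟨f⟩ : Nonempty (Fin n ↪ Fin d × Fin d) :=
      Function.Embedding.nonempty_of_card_le (by simpa [pow_two] using hd2)
    refine ⟨fun v => match v with
      | .inl _ => ⟨0, hd0⟩
      | .inr (.inl i) => (f i).1
      | .inr (.inr i) => (f i).2, ?_⟩
    intro σ hφ v
    obtain ⟨hc, hleg⟩ := spider_aut_struct n hn σ
    have key : ∀ i : Fin n, σ (.inr (.inl i)) = .inr (.inl i) ∧
        σ (.inr (.inr i)) = .inr (.inr i) := by
      intro i
      obtain ⟨j, hj1, hj2⟩ := hleg i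
      have e1 := hφ (.inr (.inl i)); rw [hj1] at e1
      have e2 := hφ (.inr (.inr i)); rw [hj2] at e2
      have : f j = f i := Prod.ext e1 e2
      have : j = i := f.injective this
      subst this
      exact ⟨hj1, hj2⟩
    rcases v with _ | (i | i)
    · exact hc
    · exact (key i).1
    · exact (key i).2
  refine le_antisymm (Nat.sInf_le hdS) (le_csInf ⟨d, hdS⟩ ?_)
  rintro e ⟨φ, hφ⟩
  by_contra hlt
  push_neg at hlt
  have hen : e ^ 2 < n := by
    by_contra hc
    push_neg at hc
    have : d ≤ e := Nat.sInf_le hc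
    omega
  -- pigeonhole: two legs with same label pair
  obtain ⟨i, j, hij, hg⟩ := Fintype.exists_ne_map_eq_of_card_lt
    (fun i : Fin n => ((φ (.inr (.inl i)), φ (.inr (.inr i))) : Fin e × Fin e))
    (by simpa [pow_two] using hen)
  set σ := spiderAut n (Equiv.swap i j) with hσ
  have hpres : ∀ v, φ (σ v) = φ v := by
    have hm : φ (.inr (.inl i)) = φ (.inr (.inl j)) := congrArg Prod.fst hg
    have hl : φ (.inr (.inr i)) = φ (.inr (.inr j)) := congrArg Prod.snd hg
    rintro (⟨⟩ | (k | k))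
    · rfl
    · show φ (.inr (.inl (Equiv.swap i j k))) = _
      rcases eq_or_ne k i with rfl | hki
      · rw [Equiv.swap_apply_left]; exact hm.symm
      rcases eq_or_ne k j with rfl | hkj
      · rw [Equiv.swap_apply_right]; exact hm
      · rw [Equiv.swap_apply_of_ne_of_ne hki hkj]
    · show φ (.inr (.inr (Equiv.swap i j k))) = _
      rcases eq_or_ne k i with rfl | hki
      · rw [Equiv.swap_apply_left]; exact hl.symm
      rcases eq_or_ne k j with rfl | hkj
      · rw [Equiv.swap_apply_right]; exact hl
      · rw [Equiv.swap_apply_of_ne_of_ne hki hkj]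
  have hfix := hφ σ hpres (.inr (.inl i))
  have hfix' : (Sum.inr (Sum.inl (Equiv.swap i j i)) : Unit ⊕ Fin n ⊕ Fin n)
      = .inr (.inl i) := hfix
  rw [Equiv.swap_apply_left] at hfix'
  simp only [Sum.inr.injEq, Sum.inl.injEq] at hfix'
  exact hij hfix'.symm
end

section
/- Let G be a connected simple graph with D(G) = 1 such that every automorphism of G[G] is of wreath form. Then for every natural number k ≥ 1, the k-th lexicographic power satisfies D(G^k) = 1. -/
open SimpleGraph

/-- Vertex type of the `k+1`-st lexicographic power. -/
def lexPowType (V : Type*) : ℕ → Type _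
  | 0 => V
  | (k+1) => V × lexPowType V k

/-- `lexPow G k` is the `(k+1)`-st lexicographic power `G^(k+1)`,
so `lexPow G 0 = G^1 = G` and `lexPow G k = G[lexPow G (k-1)]`. -/
def lexPow {V : Type*} (G : SimpleGraph V) : (k : ℕ) → SimpleGraph (lexPowType V k)
  | 0 => G
  | (k+1) => lexProd G (lexPow G k)

/-- A graph is asymmetric: the only automorphism is the identity. -/
def Asym {U : Type*} (K : SimpleGraph U) : Prop := ∀ σ : K ≃g K, ∀ v, σ v = v

lemma asym_of_dn_one {V : Type*} {G : SimpleGraph V}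
    (h : distinguishingNumber G = 1) : Asym G := by
  set S : Set ℕ := {d : ℕ | ∃ φ : V → Fin d,
    ∀ σ : G ≃g G, (∀ v, φ (σ v) = φ v) → ∀ v, σ v = v} with hS
  have hd : distinguishingNumber G = sInf S := rfl
  rw [hd] at h
  have hne : S.Nonempty := by
    by_contra hc
    rw [Set.not_nonempty_iff_eq_empty] at hc
    rw [hc, Nat.sInf_empty] at h
    exact one_ne_zero h.symm
  have hmem := Nat.sInf_mem hne
  rw [h] at hmem
  obtain ⟨φ, hφ⟩ := hmem
  intro σ v
  exact hφ σ (fun v => Subsingleton.elim _ _) v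

lemma dn_one {V : Type*} [Nonempty V] {G : SimpleGraph V} (h : Asym G) :
    distinguishingNumber G = 1 := by
  set S : Set ℕ := {d : ℕ | ∃ φ : V → Fin d,
    ∀ σ : G ≃g G, (∀ v, φ (σ v) = φ v) → ∀ v, σ v = v} with hS
  have hd : distinguishingNumber G = sInf S := rfl
  rw [hd]
  have h1 : (1 : ℕ) ∈ S := ⟨fun _ => 0, fun σ _ v => h σ v⟩
  refine le_antisymm (Nat.sInf_le h1) ?_
  rcases Nat.eq_zero_or_pos (sInf S) with h0 | hp
  · exfalso
    have h2 := Nat.sInf_mem (⟨1, h1⟩ : S.Nonempty)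
    rw [h0] at h2
    obtain ⟨φ, -⟩ := h2
    exact (φ (Classical.arbitrary V)).elim0
  · exact hp

private lemma walk_exists_adj_ne {U β : Type*} {K : SimpleGraph U} (g : U → β)
    {x x' : U} (w : K.Walk x x') :
    g x ≠ g x' → ∃ u v, K.Adj u v ∧ g u ≠ g v := by
  induction w with
  | nil => intro h; exact absurd rfl h
  | @cons u v w' h p ih =>
    intro hxx
    by_cases hg : g u = g v
    · exact ih (fun hh => hxx (hg.trans hh))
    · exact ⟨u, v, h, hg⟩

private lemma walk_exists_adj_mem {U : Type*} {K : SimpleGraph U} (S : U → Prop)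
    {x x' : U} (w : K.Walk x x') :
    ¬ S x → S x' → ∃ u v, K.Adj u v ∧ ¬ S u ∧ S v := by
  induction w with
  | nil => intro h1 h2; exact absurd h2 h1
  | @cons u v w' h p ih =>
    intro h1 h2
    by_cases hm : S v
    · exact ⟨u, v, h, h1, hm⟩
    · exact ih hm h2

section MainLemma
variable {V W : Type*} {G : SimpleGraph V} {H : SimpleGraph W}

/-- Key lemma: if `G` is asymmetric and `H` is connected (and finite), then any automorphism
of the lexicographic product `G[H]` preserves fibers (first coordinates of vertices in the
same fiber stay together). -/
lemma fiber_pres [Fintype W] (hH : H.Connected) (hGa : Asym G)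
    (f : lexProd G H ≃g lexProd G H) :
    ∀ a x x', (f (a, x)).1 = (f (a, x')).1 := by
  classical
  by_contra hc
  push_neg at hc
  obtain ⟨a, x, x', hne⟩ := hc
  obtain ⟨wk⟩ := hH.preconnected x x'
  obtain ⟨u, v, huv, hbne⟩ := walk_exists_adj_ne (fun w => (f (a, w)).1) wk hne
  set b := (f (a, u)).1 with hb
  set b' := (f (a, v)).1 with hb'
  have hadj : (lexProd G H).Adj (f (a, u)) (f (a, v)) :=
    f.map_adj_iff.mpr (Or.inr ⟨rfl, huv⟩)
  have hGbb' : G.Adj b b' := by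
    rcases hadj with h | ⟨h, _⟩
    · exact h
    · exact absurd h hbne
  -- the image of the fiber over `a` is a module
  have module : ∀ r, (¬ ∃ w, f (a, w) = r) → ∀ w1 w2,
      (lexProd G H).Adj r (f (a, w1)) → (lexProd G H).Adj r (f (a, w2)) := by
    intro r hr w1 w2 h1
    have hs : (f.symm r).1 ≠ a := by
      intro hcon
      exact hr ⟨(f.symm r).2, by
        rw [show ((a : V), (f.symm r).2) = f.symm r from Prod.ext hcon.symm rfl]
        exact f.apply_symm_apply r⟩
    have h1' := f.symm.map_adj_iff.mpr h1
    rw [f.symm_apply_apply] at h1'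
    have hGsa : G.Adj (f.symm r).1 a := by
      rcases h1' with h | ⟨h, _⟩
      · exact h
      · exact absurd h hs
    have h2' : (lexProd G H).Adj (f.symm r) (f.symm (f (a, w2))) := by
      rw [f.symm_apply_apply]
      exact Or.inl hGsa
    exact f.symm.map_adj_iff.mp h2'
  -- each fiber meeting the image does so properly
  have properS : ∀ c : V, (∃ zz, (f (a, zz)).1 = c) → ∃ z, ¬ ∃ w, f (a, w) = (c, z) := by
    intro c _
    by_contra hall
    push_neg at hall
    set ψ : W → W := fun z => (f.symm (c, z)).2 with hψdef
    have hψ : ∀ z, f (a, ψ z) = (c, z) := by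
      intro z
      obtain ⟨w, hw⟩ := hall z
      have hh1 : f.symm (c, z) = (a, w) := by rw [← hw, f.symm_apply_apply]
      have hh2 : ψ z = w := by rw [hψdef]; simp only [hh1]
      rw [hh2]
      exact hw
    have hinj : Function.Injective ψ := by
      intro z1 z2 h
      have : ((c : V), z1) = (c, z2) := by rw [← hψ z1, ← hψ z2, h]
      simpa using this
    have hsurj : Function.Surjective ψ := Finite.injective_iff_surjective.mp hinj
    have hdex : ∃ wd, (f (a, wd)).1 ≠ c := by
      by_cases hbc : b = c
      · exact ⟨v, by rw [← hb']; rw [← hbc]; exact fun hh => hbne hh.symm⟩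
      · exact ⟨u, by rw [← hb]; exact hbc⟩
    obtain ⟨wd, hwd⟩ := hdex
    obtain ⟨z, hz⟩ := hsurj wd
    have hcz := hψ z
    rw [hz] at hcz
    exact hwd (by rw [hcz])
  -- the shadow of the image is a clique
  have clique : ∀ c, (∃ w, (f (a, w)).1 = c) → ∀ c', (∃ w, (f (a, w)).1 = c') →
      c ≠ c' → G.Adj c c' := by
    intro c hc c' hc' hcc'
    obtain ⟨u0, hu0⟩ := hc
    obtain ⟨u0', hu0'⟩ := hc'
    obtain ⟨z, hz⟩ := properS c ⟨u0, hu0⟩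
    have hS'end : (∃ w, f (a, w) = (c, (f (a, u0)).2)) := ⟨u0, Prod.ext hu0 rfl⟩
    obtain ⟨wk2⟩ := hH.preconnected z (f (a, u0)).2
    obtain ⟨w1, w2, hw12, hnw1, hw2⟩ :=
      walk_exists_adj_mem (fun w => ∃ ww, f (a, ww) = ((c : V), w)) wk2 hz hS'end
    obtain ⟨wv, hwv⟩ := hw2
    have hadj1 : (lexProd G H).Adj (c, w1) (f (a, wv)) := by
      rw [hwv]
      exact Or.inr ⟨rfl, hw12⟩
    have hadj2 := module (c, w1) hnw1 wv u0' hadj1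
    rcases hadj2 with h | ⟨h, _⟩
    · rwa [hu0'] at h
    · exact absurd (h.trans hu0') hcc'
  -- vertices outside the shadow see the shadow uniformly
  have outside : ∀ d, (¬ ∃ w, (f (a, w)).1 = d) → ∀ c, (∃ w, (f (a, w)).1 = c) →
      ∀ c', (∃ w, (f (a, w)).1 = c') → G.Adj d c → G.Adj d c' := by
    intro d hd c hc c' hc' hdc
    obtain ⟨u1, h1⟩ := hc
    obtain ⟨u2, h2⟩ := hc'
    have hnW : Nonempty W := hH.nonempty
    obtain ⟨z0⟩ := hnW
    have hr : ¬ ∃ w, f (a, w) = ((d : V), z0) := by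
      rintro ⟨w, hw⟩
      exact hd ⟨w, by rw [hw]⟩
    have hadj1 : (lexProd G H).Adj (d, z0) (f (a, u1)) := Or.inl (by rwa [h1])
    have hadj2 := module (d, z0) hr u1 u2 hadj1
    rcases hadj2 with h | ⟨h, _⟩
    · rwa [h2] at h
    · exact (hd ⟨u2, h.symm⟩).elim
  -- b and b' are twins in G
  have hbM : ∃ w, (f (a, w)).1 = b := ⟨u, rfl⟩
  have hb'M : ∃ w, (f (a, w)).1 = b' := ⟨v, rfl⟩
  have twin : ∀ e, e ≠ b → e ≠ b' → (G.Adj e b ↔ G.Adj e b') := by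
    intro e heb heb'
    by_cases he : ∃ w, (f (a, w)).1 = e
    · exact ⟨fun _ => clique e he b' hb'M heb', fun _ => clique e he b hbM heb⟩
    · exact ⟨fun h => outside e he b hbM b' hb'M h,
        fun h => outside e he b' hb'M b hbM h⟩
  -- the swap of b and b' is then an automorphism of G, contradicting asymmetry
  have hone : ∀ p q, G.Adj p q → G.Adj (Equiv.swap b b' p) (Equiv.swap b b' q) := by
    intro p q h
    by_cases hpb : p = b
    · subst hpb
      by_cases hqb : q = b
      · subst hqb; exact absurd h G.irrefl
      · by_cases hqb' : q = b'
        · subst hqb'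
          rw [Equiv.swap_apply_left, Equiv.swap_apply_right]
          exact hGbb'.symm
        · rw [Equiv.swap_apply_left, Equiv.swap_apply_of_ne_of_ne hqb hqb']
          exact ((twin q hqb hqb').mp h.symm).symm
    · by_cases hpb' : p = b'
      · subst hpb'
        by_cases hqb : q = b
        · subst hqb
          rw [Equiv.swap_apply_right, Equiv.swap_apply_left]
          exact hGbb'
        · by_cases hqb' : q = b'
          · subst hqb'; exact absurd h G.irrefl
          · rw [Equiv.swap_apply_right, Equiv.swap_apply_of_ne_of_ne hqb hqb']
            exact ((twin q hqb hqb').mpr h.symm).symm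
      · rw [Equiv.swap_apply_of_ne_of_ne hpb hpb']
        by_cases hqb : q = b
        · subst hqb
          rw [Equiv.swap_apply_left]
          exact (twin p hpb hpb').mp h
        · by_cases hqb' : q = b'
          · subst hqb'
            rw [Equiv.swap_apply_right]
            exact (twin p hpb hpb').mpr h
          · rw [Equiv.swap_apply_of_ne_of_ne hqb hqb']
            exact h
  have σiff : ∀ p q, G.Adj (Equiv.swap b b' p) (Equiv.swap b b' q) ↔ G.Adj p q := by
    intro p q
    constructor
    · intro h
      have h2 := hone _ _ h
      simpa [Equiv.swap_apply_self] using h2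
    · exact hone p q
  have hσ := hGa ⟨Equiv.swap b b', σiff _ _⟩ b
  simp only [RelIso.coe_fn_mk, Equiv.swap_apply_left] at hσ
  exact hbne hσ.symm

/-- Main lemma: lexicographic product of an asymmetric graph with an asymmetric connected
graph is asymmetric. -/
lemma asym_lexProd [Fintype W] (hH : H.Connected) (hGa : Asym G) (hHa : Asym H) :
    Asym (lexProd G H) := by
  intro f
  have hnW : Nonempty W := hH.nonempty
  obtain ⟨w0⟩ := hnW
  have fp : ∀ (g : lexProd G H ≃g lexProd G H) (a : V) (x x' : W),
      (g (a, x)).1 = (g (a, x')).1 := fun g => fiber_pres hH hGa g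
  set A : (lexProd G H ≃g lexProd G H) → V → V := fun g a => (g (a, w0)).1 with hA
  have hinv : ∀ (g : lexProd G H ≃g lexProd G H) (a : V), A g.symm (A g a) = a := by
    intro g a
    have h2 : (g.symm ((g (a, w0)).1, w0)).1 = (g.symm ((g (a, w0)).1, (g (a, w0)).2)).1 :=
      fp g.symm _ w0 _
    show (g.symm ((g (a, w0)).1, w0)).1 = a
    rw [h2, Prod.mk.eta, g.symm_apply_apply]
  have hinj : ∀ g, Function.Injective (A g) := by
    intro g p q h
    have h1 := hinv g p
    rw [h, hinv g q] at h1
    exact h1.symm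
  have hhom : ∀ (g : lexProd G H ≃g lexProd G H) (a a' : V),
      G.Adj a a' → G.Adj (A g a) (A g a') := by
    intro g a a' h
    have hadj : (lexProd G H).Adj (g (a, w0)) (g (a', w0)) :=
      g.map_adj_iff.mpr (Or.inl h)
    rcases hadj with h2 | ⟨h2, _⟩
    · exact h2
    · exact absurd (hinj g h2) h.ne
  let α : G ≃g G :=
    ⟨⟨A f, A f.symm, hinv f, fun a => by
        have h1 := hinv f.symm a
        simpa using h1⟩,
      @fun p q => ⟨fun h => by
          change G.Adj (A f p) (A f q) at h
          have h1 := hhom f.symm _ _ h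
          rwa [hinv f p, hinv f q] at h1,
        hhom f p q⟩⟩
  have hα : ∀ (a : V) (x : W), (f (a, x)).1 = a := by
    intro a x
    have h1 : A f a = a := hGa α a
    rw [fp f a x w0]
    exact h1
  have hαs : ∀ (a : V) (x : W), (f.symm (a, x)).1 = a := by
    intro a x
    have h := hα (f.symm (a, x)).1 (f.symm (a, x)).2
    rw [Prod.mk.eta, f.apply_symm_apply] at h
    exact h.symm
  rintro ⟨a, x⟩
  have hB : ∀ w, f (a, w) = (a, (f (a, w)).2) := fun w => Prod.ext (hα a w) rfl
  have hBs : ∀ w, f.symm (a, w) = (a, (f.symm (a, w)).2) := fun w => Prod.ext (hαs a w) rfl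
  set B : W → W := fun w => (f (a, w)).2 with hBdef
  set Bs : W → W := fun w => (f.symm (a, w)).2 with hBsdef
  have hBinv : ∀ w, Bs (B w) = w := by
    intro w
    have h1 : ((a : V), B w) = f (a, w) := (hB w).symm
    show (f.symm (a, B w)).2 = w
    rw [h1, f.symm_apply_apply]
  have hBsinv : ∀ w, B (Bs w) = w := by
    intro w
    have h1 : ((a : V), Bs w) = f.symm (a, w) := (hBs w).symm
    show (f (a, Bs w)).2 = w
    rw [h1, f.apply_symm_apply]
  have hBhom : ∀ w w', H.Adj w w' → H.Adj (B w) (B w') := by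
    intro w w' h
    have hadj : (lexProd G H).Adj (f (a, w)) (f (a, w')) :=
      f.map_adj_iff.mpr (Or.inr ⟨rfl, h⟩)
    rw [hB w, hB w'] at hadj
    rcases hadj with h2 | ⟨_, h2⟩
    · exact absurd h2 G.irrefl
    · exact h2
  have hBshom : ∀ w w', H.Adj w w' → H.Adj (Bs w) (Bs w') := by
    intro w w' h
    have hadj : (lexProd G H).Adj (f.symm (a, w)) (f.symm (a, w')) :=
      f.symm.map_adj_iff.mpr (Or.inr ⟨rfl, h⟩)
    rw [hBs w, hBs w'] at hadj
    rcases hadj with h2 | ⟨_, h2⟩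
    · exact absurd h2 G.irrefl
    · exact h2
  let β : H ≃g H :=
    ⟨⟨B, Bs, hBinv, hBsinv⟩,
      @fun w w' => ⟨fun h => by
          simp only [Equiv.coe_fn_mk] at h
          have h1 := hBshom _ _ h
          rwa [hBinv w, hBinv w'] at h1,
        hBhom w w'⟩⟩
  have hβ : B x = x := hHa β x
  show f (a, x) = (a, x)
  rw [hB x]
  exact Prod.ext rfl hβ

lemma lexProd_connected (hG : G.Connected) (hH : H.Connected) :
    (lexProd G H).Connected := by
  haveI : Nonempty V := hG.nonempty
  haveI : Nonempty W := hH.nonempty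
  rw [connected_iff]
  refine ⟨?_, inferInstance⟩
  have step : ∀ (a : V) (x y : W), (lexProd G H).Reachable (a, x) (a, y) := by
    intro a x y
    exact Reachable.map (⟨fun w => ((a : V), w), fun h => Or.inr ⟨rfl, h⟩⟩ : H →g lexProd G H)
      (hH.preconnected x y)
  have main : ∀ (a c : V) (w : G.Walk a c) (x y : W),
      (lexProd G H).Reachable (a, x) (c, y) := by
    intro a c w
    induction w with
    | nil => intro x y; exact step _ x y
    | @cons p q r h pw ih =>
      intro x y
      have h1 : (lexProd G H).Adj (p, x) (q, x) := Or.inl h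
      exact h1.reachable.trans (ih x y)
  rintro ⟨a, x⟩ ⟨c, y⟩
  obtain ⟨w⟩ := hG.preconnected a c
  exact main a c w x y

end MainLemma

private def lexPowTypeFintype {V : Type*} [Fintype V] : ∀ k, Fintype (lexPowType V k)
  | 0 => inferInstanceAs (Fintype V)
  | (k + 1) => letI := lexPowTypeFintype (V := V) k
               inferInstanceAs (Fintype (V × lexPowType V k))

theorem stmt6 {V : Type*} [Fintype V] (G : SimpleGraph V)
    (hG : G.Connected) (hD : distinguishingNumber G = 1) (hw : wreathForm G G)
    (k : ℕ) (hk : 1 ≤ k) :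
    distinguishingNumber (lexPow G (k - 1)) = 1 := by
  haveI : Nonempty V := hG.nonempty
  have hAsym : Asym G := asym_of_dn_one hD
  have key : ∀ j, Asym (lexPow G j) ∧ (lexPow G j).Connected := by
    intro j
    induction j with
    | zero => exact ⟨hAsym, hG⟩
    | succ n ih =>
      letI : Fintype (lexPowType V n) := lexPowTypeFintype n
      exact ⟨asym_lexProd ih.2 hAsym ih.1, lexProd_connected hG ih.2⟩
  obtain ⟨h1, h2⟩ := key (k - 1)
  haveI : Nonempty (lexPowType V (k - 1)) := h2.nonempty
  exact dn_one h1
end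

section
/- For all integers m > 2 and n > 5, the lexicographic product P_m[C_n] of the path of order m with the cycle of order n has distinguishing index D'(P_m[C_n]) = 2. -/
open SimpleGraph

namespace Stmt9Aux

/-- The cycle-edge pattern `{0,1,3}` (edges `{0,1}, {1,2}, {3,4}`), on values. -/
abbrev patP (n : ℕ) (x y : Fin n) : Prop :=
  (x.val = 0 ∧ y.val = 1) ∨ (y.val = 0 ∧ x.val = 1) ∨
  (x.val = 1 ∧ y.val = 2) ∨ (y.val = 1 ∧ x.val = 2) ∨
  (x.val = 3 ∧ y.val = 4) ∨ (y.val = 3 ∧ x.val = 4)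

/-- The special cross edge between `(0,0)` and `(1,0)`. -/
abbrev specP (m n : ℕ) (u v : Fin m × Fin n) : Prop :=
  (u.1.val = 0 ∧ u.2.val = 0 ∧ v.1.val = 1 ∧ v.2.val = 0) ∨
  (v.1.val = 0 ∧ v.2.val = 0 ∧ u.1.val = 1 ∧ u.2.val = 0)

/-- The distinguishing edge labeling (as a function on pairs of endpoints). -/
def fLab (m n : ℕ) (u v : Fin m × Fin n) : Fin 2 :=
  if u.1 = v.1 then (if patP n u.2 v.2 then 1 else 0)
  else (if specP m n u v then 1 else 0)

lemma patP_symm (n : ℕ) (x y : Fin n) : patP n x y ↔ patP n y x := by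
  constructor <;> rintro (⟨h1,h2⟩|⟨h1,h2⟩|⟨h1,h2⟩|⟨h1,h2⟩|⟨h1,h2⟩|⟨h1,h2⟩) <;> tauto

lemma specP_symm (m n : ℕ) (u v : Fin m × Fin n) : specP m n u v ↔ specP m n v u := by
  constructor <;> rintro (h|h) <;> tauto

lemma fLab_symm (m n : ℕ) (u v : Fin m × Fin n) : fLab m n u v = fLab m n v u := by
  unfold fLab
  by_cases h : u.1 = v.1
  · rw [if_pos h, if_pos h.symm, if_congr (patP_symm n u.2 v.2) rfl rfl]
  · rw [if_neg h, if_neg (show ¬ v.1 = u.1 from fun h' => h h'.symm), if_congr (specP_symm m n u v) rfl rfl]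

variable {j k : ℕ}

abbrev L (j k : ℕ) : SimpleGraph (Fin (j+3) × Fin (k+6)) :=
  lexProd (pathGraph (j+3)) (cycleGraph (k+6))

lemma cyc_adj (u v : Fin (k+6)) :
    (cycleGraph (k+6)).Adj u v ↔ u = v + 1 ∨ v = u + 1 := by
  refine (cycleGraph_adj (n := k+4) (u := u) (v := v)).trans ?_
  rw [sub_eq_iff_eq_add, sub_eq_iff_eq_add, add_comm 1 v, add_comm 1 u]

lemma lex_adj (u v : Fin (j+3) × Fin (k+6)) :
    (L j k).Adj u v ↔ (pathGraph (j+3)).Adj u.1 v.1 ∨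
      (u.1 = v.1 ∧ (cycleGraph (k+6)).Adj u.2 v.2) := Iff.rfl


lemma val_add_one (x : Fin (k+6)) : (x + 1).val = (x.val + 1) % (k+6) := by
  rw [Fin.add_def, Fin.val_one]

lemma mk_add_one (t : ℕ) (h' : t < k+6) (h : t + 1 < k+6) :
    (⟨t, h'⟩ : Fin (k+6)) + 1 = ⟨t+1, h⟩ := by
  apply Fin.ext
  rw [val_add_one]
  exact Nat.mod_eq_of_lt h

lemma adj_mk (t : ℕ) (h' : t < k+6) (h : t + 1 < k+6) :
    (cycleGraph (k+6)).Adj ⟨t, h'⟩ ⟨t+1, h⟩ :=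
  (cyc_adj _ _).mpr (Or.inr (mk_add_one t h' h).symm)

/-- An automorphism maps same-fiber adjacent pairs to same-fiber pairs. -/
lemma fiber_step (σ : L j k ≃g L j k) (u v : Fin (j+3) × Fin (k+6))
    (h1 : u.1 = v.1) (hadj : (L j k).Adj u v) : (σ u).1 = (σ v).1 := by
  by_contra hne
  have hadj' : (L j k).Adj (σ u) (σ v) := σ.map_rel_iff.mpr hadj
  rcases hadj' with hpa | ⟨he, _⟩
  swap
  · exact hne he
  -- cycle adjacency of u.2 v.2
  have hcyc : (cycleGraph (k+6)).Adj u.2 v.2 := by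
    rcases hadj with hp | ⟨_, hc⟩
    · rw [h1] at hp; exact absurd hp (SimpleGraph.irrefl _)
    · exact hc
  have hc2 : ((⟨2, by omega⟩ : Fin (k+6))).val = 2 := rfl
  set c2 : Fin (k+6) := ⟨2, by omega⟩ with hc2d
  set c3 : Fin (k+6) := ⟨3, by omega⟩ with hc3d
  -- the two witnesses upstairs
  set w1' : Fin (j+3) × Fin (k+6) := ((σ v).1, (σ v).2 + c2) with hw1'
  set w2' : Fin (j+3) × Fin (k+6) := ((σ v).1, (σ v).2 + c3) with hw2'
  have hw12 : w1' ≠ w2' := by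
    intro h
    have : c2 = c3 := add_left_cancel (congrArg Prod.snd h)
    have := congrArg Fin.val this
    simp [hc2d, hc3d] at this
  have hnadj : ∀ c : Fin (k+6), c ≠ 1 → c + 1 ≠ 0 →
      ¬ (L j k).Adj (σ v) ((σ v).1, (σ v).2 + c) := by
    intro c hc1 hc0 h
    rcases h with hp | ⟨_, hcad⟩
    · exact absurd hp (SimpleGraph.irrefl _)
    · rcases (cyc_adj _ _).mp hcad with h | h
      · rw [add_assoc] at h
        exact hc0 (left_eq_add.mp h)
      · exact hc1 (add_left_cancel h)
  have hne1 : ∀ c : Fin (k+6), c ≠ 0 → ((σ v).1, (σ v).2 + c) ≠ σ v := by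
    intro c hc h
    have h2 : (σ v).2 + c = (σ v).2 := congrArg Prod.snd h
    exact hc (add_eq_left.mp h2)
  have hadjw : ∀ c : Fin (k+6), (L j k).Adj (σ u) ((σ v).1, (σ v).2 + c) :=
    fun c => Or.inl hpa
  -- pull back
  have key : ∀ w' : Fin (j+3) × Fin (k+6), (L j k).Adj (σ u) w' → ¬ (L j k).Adj (σ v) w' →
      w' ≠ σ v → (σ.symm w').1 = u.1 ∧
        ((σ.symm w').2 = u.2 + 1 ∨ u.2 = (σ.symm w').2 + 1) ∧ (σ.symm w').2 ≠ v.2 := by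
    intro w' ha hna hnv
    set w := σ.symm w' with hw
    have hσw : σ w = w' := σ.apply_symm_apply w'
    have haw : (L j k).Adj u w := by
      rw [← σ.map_rel_iff, hσw]; exact ha
    have hnaw : ¬ (L j k).Adj v w := by
      rw [← σ.map_rel_iff, hσw]; exact hna
    have hwv : w ≠ v := fun h => hnv (by rw [← hσw, h])
    rcases haw with hp | ⟨he2, hcw⟩
    · exact absurd (Or.inl (h1 ▸ hp)) hnaw
    · refine ⟨he2.symm, ?_, ?_⟩
      · exact Or.symm ((cyc_adj _ _).mp hcw)
      · intro h
        exact hwv (Prod.ext (he2.symm.trans h1) h)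
  have hc21 : c2 ≠ 1 := by
    intro h
    have := congrArg Fin.val h
    rw [hc2] at this
    simp [Fin.val_one] at this
  have hc31 : c3 ≠ 1 := by
    intro h
    have := congrArg Fin.val h
    simp [hc3d, Fin.val_one] at this
  have hc20 : c2 + 1 ≠ 0 := by
    rw [hc2d, mk_add_one 2 (by omega) (by omega)]
    intro h
    have := congrArg Fin.val h
    simp at this
  have hc30 : c3 + 1 ≠ 0 := by
    rw [hc3d, mk_add_one 3 (by omega) (by omega)]
    intro h
    have := congrArg Fin.val h
    simp at this
  have hc2z : c2 ≠ 0 := by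
    intro h
    have := congrArg Fin.val h
    simp [hc2d] at this
  have hc3z : c3 ≠ 0 := by
    intro h
    have := congrArg Fin.val h
    simp [hc3d] at this
  obtain ⟨hf1, hd1, hv1⟩ := key w1' (hadjw c2) (hnadj c2 hc21 hc20) (hne1 c2 hc2z)
  obtain ⟨hf2, hd2, hv2⟩ := key w2' (hadjw c3) (hnadj c3 hc31 hc30) (hne1 c3 hc3z)
  have hsnd : (σ.symm w1').2 = (σ.symm w2').2 := by
    rcases (cyc_adj _ _).mp hcyc with hu | hv
    · -- u.2 = v.2 + 1
      have e1 : (σ.symm w1').2 = u.2 + 1 := by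
        rcases hd1 with h | h
        · exact h
        · exact absurd (add_right_cancel (h.symm.trans hu) : (σ.symm w1').2 = v.2) hv1
      have e2 : (σ.symm w2').2 = u.2 + 1 := by
        rcases hd2 with h | h
        · exact h
        · exact absurd (add_right_cancel (h.symm.trans hu) : (σ.symm w2').2 = v.2) hv2
      rw [e1, e2]
    · -- v.2 = u.2 + 1
      have e1 : u.2 = (σ.symm w1').2 + 1 := by
        rcases hd1 with h | h
        · exact absurd (h.trans hv.symm) hv1
        · exact h
      have e2 : u.2 = (σ.symm w2').2 + 1 := by
        rcases hd2 with h | h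
        · exact absurd (h.trans hv.symm) hv2
        · exact h
      exact add_right_cancel (e1.symm.trans e2)
  have : σ.symm w1' = σ.symm w2' := Prod.ext (hf1.trans hf2.symm) hsnd
  exact hw12 (σ.symm.injective this)

/-- The first coordinate of `σ (a, x)` does not depend on `x`. -/
lemma fiber_const (σ : L j k ≃g L j k) (a : Fin (j+3)) (x y : Fin (k+6)) :
    (σ (a, x)).1 = (σ (a, y)).1 := by
  suffices h : ∀ t (ht : t < k+6), (σ (a, ⟨t, ht⟩)).1 = (σ (a, ⟨0, by omega⟩)).1 by
    rw [show x = ⟨x.val, x.isLt⟩ from rfl, show y = ⟨y.val, y.isLt⟩ from rfl,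
      h x.val x.isLt, h y.val y.isLt]
  intro t
  induction t with
  | zero => intro ht; rfl
  | succ s ih =>
    intro ht
    have hs : s < k+6 := by omega
    have step : (σ (a, ⟨s, hs⟩)).1 = (σ (a, ⟨s+1, ht⟩)).1 :=
      fiber_step σ (a, ⟨s, hs⟩) (a, ⟨s+1, ht⟩) rfl (Or.inr ⟨rfl, adj_mk s hs ht⟩)
    rw [← step, ih hs]

lemma rigid (σ : L j k ≃g L j k)
    (hA : ∀ u v, (L j k).Adj u v →
      fLab (j+3) (k+6) (σ u) (σ v) = fLab (j+3) (k+6) u v) :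
    ∀ p : Fin (j+3) × Fin (k+6), σ p = p := by
  have p0 : (0:ℕ) < j+3 := by omega
  have p1 : (1:ℕ) < j+3 := by omega
  have p2 : (2:ℕ) < j+3 := by omega
  have q0 : (0:ℕ) < k+6 := by omega
  have q1 : (1:ℕ) < k+6 := by omega
  have q2 : (2:ℕ) < k+6 := by omega
  have q3 : (3:ℕ) < k+6 := by omega
  have q4 : (4:ℕ) < k+6 := by omega
  obtain ⟨π, τ, hsplit⟩ : ∃ (π : Fin (j+3) → Fin (j+3))
      (τ : Fin (j+3) → Fin (k+6) → Fin (k+6)), ∀ a x, σ (a, x) = (π a, τ a x) :=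
    ⟨fun a => (σ (a, ⟨0, q0⟩)).1, fun a x => (σ (a, x)).2,
      fun a x => Prod.ext (fiber_const σ a x _) rfl⟩
  have hσinj : Function.Injective σ := EquivLike.injective σ
  have hτinj : ∀ a, Function.Injective (τ a) := by
    intro a x x' h
    have h2 : σ (a, x) = σ (a, x') := by rw [hsplit, hsplit, h]
    exact congrArg Prod.snd (hσinj h2)
  have hτsurj : ∀ a, Function.Surjective (τ a) :=
    fun a => Finite.injective_iff_surjective.mp (hτinj a)
  have hπinj : Function.Injective π := by
    intro a b h
    obtain ⟨x, hx⟩ := hτsurj a (τ b ⟨0, q0⟩)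
    have h2 : σ (a, x) = σ (b, ⟨0, q0⟩) := by rw [hsplit, hsplit, h, hx]
    exact congrArg Prod.fst (hσinj h2)
  have hπadj : ∀ a b, (pathGraph (j+3)).Adj a b →
      (pathGraph (j+3)).Adj (π a) (π b) := by
    intro a b hab
    have h := σ.map_rel_iff.mpr
      (show (L j k).Adj (a, ⟨0, q0⟩) (b, ⟨0, q0⟩) from Or.inl hab)
    rw [hsplit, hsplit] at h
    rcases h with h | ⟨he, _⟩
    · exact h
    · exact absurd (hπinj he) hab.ne
  have hτadj : ∀ a x y, (cycleGraph (k+6)).Adj x y →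
      (cycleGraph (k+6)).Adj (τ a x) (τ a y) := by
    intro a x y hxy
    have h := σ.map_rel_iff.mpr (show (L j k).Adj (a,x) (a,y) from Or.inr ⟨rfl, hxy⟩)
    rw [hsplit, hsplit] at h
    rcases h with h | ⟨_, hc⟩
    · exact absurd h (SimpleGraph.irrefl _)
    · exact hc
  have hPat : ∀ a x y, (cycleGraph (k+6)).Adj x y →
      (patP (k+6) (τ a x) (τ a y) ↔ patP (k+6) x y) := by
    intro a x y hxy
    have h := hA (a,x) (a,y) (Or.inr ⟨rfl, hxy⟩)
    rw [hsplit, hsplit] at h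
    unfold fLab at h
    rw [if_pos rfl, if_pos rfl] at h
    constructor
    · intro hp
      by_contra hq
      rw [if_pos hp, if_neg hq] at h
      exact absurd h (by decide)
    · intro hq
      by_contra hp
      rw [if_neg hp, if_pos hq] at h
      exact absurd h (by decide)
  -- the special cross edge forces `π ⟨0⟩ = ⟨0⟩`
  have hπa0 : π ⟨0, p0⟩ = ⟨0, p0⟩ := by
    have hspec := hA (⟨0, p0⟩, ⟨0, q0⟩) (⟨1, p1⟩, ⟨0, q0⟩)
      (Or.inl (pathGraph_adj.mpr (Or.inl rfl)))
    rw [hsplit, hsplit] at hspec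
    unfold fLab at hspec
    have hne01 : π ⟨0, p0⟩ ≠ π ⟨1, p1⟩ := by
      intro h
      have := congrArg Fin.val (hπinj h)
      simp only [Fin.val_mk] at this
      omega
    rw [if_neg hne01, if_neg (show ¬ (⟨0, p0⟩ : Fin (j+3)) = ⟨1, p1⟩ by
        intro h
        have := congrArg Fin.val h
        simp only [Fin.val_mk] at this
        omega),
      if_pos (show specP (j+3) (k+6) (⟨0, p0⟩, ⟨0, q0⟩)
        (⟨1, p1⟩, ⟨0, q0⟩) from Or.inl ⟨rfl, rfl, rfl, rfl⟩)] at hspec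
    have hsp : specP (j+3) (k+6) (π ⟨0, p0⟩, τ ⟨0, p0⟩ ⟨0, q0⟩)
        (π ⟨1, p1⟩, τ ⟨1, p1⟩ ⟨0, q0⟩) := by
      by_contra h
      rw [if_neg h] at hspec
      exact absurd hspec (by decide)
    rcases hsp with ⟨h1, _, _, _⟩ | ⟨h1, _, h3, _⟩
    · exact Fin.ext h1
    · exfalso
      dsimp only at h1 h3
      have hadj21 : (pathGraph (j+3)).Adj ⟨2, p2⟩ ⟨1, p1⟩ :=
        pathGraph_adj.mpr (Or.inr rfl)
      have h2 := hπadj _ _ hadj21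
      rcases pathGraph_adj.mp h2 with h | h
      · omega
      · have he : π ⟨2, p2⟩ = π ⟨0, p0⟩ := Fin.ext (by omega)
        have := congrArg Fin.val (hπinj he)
        simp only [Fin.val_mk] at this
        omega
  -- π is the identity
  have hπ : ∀ t (ht : t < j+3), π ⟨t, ht⟩ = ⟨t, ht⟩ := by
    intro t
    induction t using Nat.strong_induction_on with
    | _ t ih =>
      match t with
      | 0 => intro ht; exact hπa0
      | 1 =>
        intro ht
        have h2 := hπadj ⟨1, p1⟩ ⟨0, p0⟩ (pathGraph_adj.mpr (Or.inr rfl))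
        rw [hπa0] at h2
        rcases pathGraph_adj.mp h2 with h | h
        · simp only [Fin.val_mk] at h
          omega
        · simp only [Fin.val_mk] at h
          exact Fin.ext (by simp only [Fin.val_mk]; omega)
      | t+2 =>
        intro ht
        have hlt1 : t+1 < j+3 := by omega
        have hlt0 : t < j+3 := by omega
        have h1' := ih (t+1) (by omega) hlt1
        have h0' := ih t (by omega) hlt0
        have h2 := hπadj ⟨t+2, ht⟩ ⟨t+1, hlt1⟩ (pathGraph_adj.mpr (Or.inr rfl))
        rw [h1'] at h2
        rcases pathGraph_adj.mp h2 with h | h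
        · exfalso
          simp only [Fin.val_mk] at h
          have he : π ⟨t+2, ht⟩ = ⟨t, hlt0⟩ := Fin.ext (by simp only [Fin.val_mk]; omega)
          have := congrArg Fin.val (hπinj (he.trans h0'.symm))
          simp only [Fin.val_mk] at this
          omega
        · simp only [Fin.val_mk] at h
          exact Fin.ext (by simp only [Fin.val_mk]; omega)
  have hπid : ∀ a, π a = a := by
    intro a
    have := hπ a.val a.isLt
    simpa using this
  -- τ is the identity on each fiber
  have hτ : ∀ a t (ht : t < k+6), τ a ⟨t, ht⟩ = ⟨t, ht⟩ := by
    intro a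
    have c01 := (hPat a ⟨0, q0⟩ ⟨1, q1⟩ (adj_mk 0 q0 q1)).mpr
      (Or.inl ⟨rfl, rfl⟩)
    have c12 := (hPat a ⟨1, q1⟩ ⟨2, q2⟩ (adj_mk 1 q1 q2)).mpr
      (Or.inr (Or.inr (Or.inl ⟨rfl, rfl⟩)))
    have c34 := (hPat a ⟨3, q3⟩ ⟨4, q4⟩ (adj_mk 3 q3 q4)).mpr
      (Or.inr (Or.inr (Or.inr (Or.inr (Or.inl ⟨rfl, rfl⟩)))))
    have hτne02 : (τ a ⟨0, q0⟩).val ≠ (τ a ⟨2, q2⟩).val := by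
      intro h
      have := congrArg Fin.val (hτinj a (Fin.ext h))
      simp only [Fin.val_mk] at this
      omega
    have key1 : (τ a ⟨1, q1⟩).val = 1 ∧
        (((τ a ⟨0, q0⟩).val = 0 ∧ (τ a ⟨2, q2⟩).val = 2) ∨
         ((τ a ⟨0, q0⟩).val = 2 ∧ (τ a ⟨2, q2⟩).val = 0)) := by
      rcases c01 with (⟨p,q⟩|⟨p,q⟩|⟨p,q⟩|⟨p,q⟩|⟨p,q⟩|⟨p,q⟩) <;>
        rcases c12 with (⟨r,s⟩|⟨r,s⟩|⟨r,s⟩|⟨r,s⟩|⟨r,s⟩|⟨r,s⟩) <;> omega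
    have hτ1 : τ a ⟨1, q1⟩ = ⟨1, q1⟩ := Fin.ext key1.1
    have hτ0 : τ a ⟨0, q0⟩ = ⟨0, q0⟩ := by
      rcases key1.2 with ⟨h0, h2⟩ | ⟨h0, h2⟩
      · exact Fin.ext h0
      · exfalso
        have hτ2 : τ a ⟨2, q2⟩ = ⟨0, q0⟩ := Fin.ext h2
        have hadj23 := hτadj a ⟨2, q2⟩ ⟨3, q3⟩ (adj_mk 2 q2 q3)
        rw [hτ2] at hadj23
        rcases (cyc_adj _ _).mp hadj23 with h | h
        · have hv := congrArg Fin.val h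
          rw [val_add_one] at hv
          simp only [Fin.val_mk] at hv
          have hlt := (τ a (⟨3, q3⟩ : Fin (k+6))).isLt
          have h35 : (τ a (⟨3, q3⟩ : Fin (k+6))).val = k+5 := by
            rcases Nat.lt_or_ge ((τ a (⟨3, q3⟩ : Fin (k+6))).val + 1) (k+6) with hl | hg
            · rw [Nat.mod_eq_of_lt hl] at hv
              omega
            · omega
          rcases c34 with (⟨p,q⟩|⟨p,q⟩|⟨p,q⟩|⟨p,q⟩|⟨p,q⟩|⟨p,q⟩) <;> omega
        · rw [mk_add_one 0 q0 q1] at h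
          have := congrArg Fin.val (hτinj a (h.trans hτ1.symm))
          simp only [Fin.val_mk] at this
          omega
    intro t
    induction t using Nat.strong_induction_on with
    | _ t ih =>
      match t with
      | 0 => intro ht; exact hτ0
      | 1 => intro ht; exact hτ1
      | t+2 =>
        intro ht
        have hlt1 : t+1 < k+6 := by omega
        have hlt0 : t < k+6 := by omega
        have h1' := ih (t+1) (by omega) hlt1
        have h0' := ih t (by omega) hlt0
        have hadj := hτadj a ⟨t+1, hlt1⟩ ⟨t+2, ht⟩ (adj_mk (t+1) hlt1 ht)
        rw [h1'] at hadj
        rcases (cyc_adj _ _).mp hadj with h | h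
        · exfalso
          have hv := congrArg Fin.val h
          rw [val_add_one] at hv
          simp only [Fin.val_mk] at hv
          rcases Nat.lt_or_ge ((τ a (⟨t+2, ht⟩ : Fin (k+6))).val + 1) (k+6) with hl | hg
          · rw [Nat.mod_eq_of_lt hl] at hv
            have he : τ a ⟨t+2, ht⟩ = ⟨t, hlt0⟩ := Fin.ext (by simp only [Fin.val_mk]; omega)
            have := congrArg Fin.val (hτinj a (he.trans h0'.symm))
            simp only [Fin.val_mk] at this
            omega
          · have hlt2 := (τ a (⟨t+2, ht⟩ : Fin (k+6))).isLt
            have heq : (τ a (⟨t+2, ht⟩ : Fin (k+6))).val + 1 = k+6 := by omega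
            rw [heq, Nat.mod_self] at hv
            omega
        · rw [h, mk_add_one (t+1) hlt1 ht]
  intro p
  have h : σ (p.1, p.2) = (p.1, p.2) := by
    rw [hsplit, hπid]
    have h2 := hτ p.1 p.2.val p.2.isLt
    rw [Fin.eta] at h2
    rw [h2]
  simpa using h

/-- The rotation automorphism of the lexicographic product. -/
def rot (j k : ℕ) : L j k ≃g L j k where
  toEquiv := Equiv.prodCongr (Equiv.refl (Fin (j+3))) (Equiv.addRight (1 : Fin (k+6)))
  map_rel_iff' := by
    rintro ⟨a, x⟩ ⟨b, y⟩
    show (L j k).Adj (a, x+1) (b, y+1) ↔ (L j k).Adj (a, x) (b, y)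
    constructor
    · rintro (h | ⟨h1, h2⟩)
      · exact Or.inl h
      · refine Or.inr ⟨h1, (cyc_adj _ _).mpr ?_⟩
        rcases (cyc_adj _ _).mp h2 with h | h
        · exact Or.inl (add_right_cancel h)
        · exact Or.inr (add_right_cancel h)
    · rintro (h | ⟨h1, h2⟩)
      · exact Or.inl h
      · refine Or.inr ⟨h1, (cyc_adj _ _).mpr ?_⟩
        rcases (cyc_adj _ _).mp h2 with h | h
        · exact Or.inl (congrArg (fun z => z + 1) h)
        · exact Or.inr (congrArg (fun z => z + 1) h)

end Stmt9Aux

theorem stmt9 (m n : ℕ) (hm : 2 < m) (hn : 5 < n) :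
    distinguishingIndex (lexProd (SimpleGraph.pathGraph m) (SimpleGraph.cycleGraph n)) = 2 := by
  obtain ⟨j, rfl⟩ : ∃ j, m = j + 3 := ⟨m - 3, by omega⟩
  obtain ⟨k, rfl⟩ : ∃ k, n = k + 6 := ⟨n - 6, by omega⟩
  have p0 : (0:ℕ) < j+3 := by omega
  have p1 : (1:ℕ) < j+3 := by omega
  have q0 : (0:ℕ) < k+6 := by omega
  unfold distinguishingIndex
  have h2 : 2 ∈ {d : ℕ | ∃ ψ : (Stmt9Aux.L j k).edgeSet → Fin d,
      ∀ σ : Stmt9Aux.L j k ≃g Stmt9Aux.L j k,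
        (∀ e, ψ (σ.mapEdgeSet e) = ψ e) → ∀ v, σ v = v} := by
    refine ⟨fun e => Sym2.lift ⟨fun u v => Stmt9Aux.fLab (j+3) (k+6) u v,
      Stmt9Aux.fLab_symm (j+3) (k+6)⟩ e.1, ?_⟩
    intro σ hσ
    apply Stmt9Aux.rigid σ
    intro u v huv
    have he : s(u, v) ∈ (Stmt9Aux.L j k).edgeSet := huv
    have h := hσ ⟨s(u,v), he⟩
    have key : Sym2.lift ⟨fun u v => Stmt9Aux.fLab (j+3) (k+6) u v,
        Stmt9Aux.fLab_symm (j+3) (k+6)⟩ (Sym2.map σ s(u,v)) =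
        Sym2.lift ⟨fun u v => Stmt9Aux.fLab (j+3) (k+6) u v,
        Stmt9Aux.fLab_symm (j+3) (k+6)⟩ s(u,v) := h
    rw [Sym2.map_pair_eq, Sym2.lift_mk, Sym2.lift_mk] at key
    exact key
  refine le_antisymm (Nat.sInf_le h2) (le_csInf ⟨2, h2⟩ ?_)
  rintro b ⟨ψ, hψ⟩
  by_contra hlt
  push_neg at hlt
  interval_cases b
  · exact (ψ ⟨s((⟨0, p0⟩, ⟨0, q0⟩), (⟨1, p1⟩, ⟨0, q0⟩)),
      Or.inl (pathGraph_adj.mpr (Or.inl rfl))⟩).elim0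
  · have hfix := hψ (Stmt9Aux.rot j k) (fun e => Subsingleton.elim _ _)
    have h := hfix (⟨0, p0⟩, ⟨0, q0⟩)
    have h2 : ((⟨0, q0⟩ : Fin (k+6)) + 1) = ⟨0, q0⟩ := congrArg Prod.snd h
    rw [Stmt9Aux.mk_add_one 0 q0 (by omega)] at h2
    have := congrArg Fin.val h2
    simp only [Fin.val_mk] at this
    omega
end

section
/- Let n ≥ 2 be an integer with n = r^4 for some positive integer r. Then the lexicographic product of the star K_{1,n} with the path P_2 satisfies 2 ≤ D'(K_{1,n}[P_2]) ≤ n^{1/4} + 1, i.e. D'(K_{1,n}[P_2]) ≤ r + 1. -/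
open SimpleGraph

namespace Stmt13Aux

abbrev Vtx (n : ℕ) := (Fin 1 ⊕ Fin n) × Fin 2

abbrev Gg (n : ℕ) : SimpleGraph (Vtx n) :=
  lexProd (completeBipartiteGraph (Fin 1) (Fin n)) (SimpleGraph.pathGraph 2)

lemma fin2 : ∀ a : Fin 2, a = 0 ∨ a = 1 := by decide

lemma path2_adj {a b : Fin 2} : (SimpleGraph.pathGraph 2).Adj a b ↔ a ≠ b := by
  rw [pathGraph_adj, Ne, Fin.ext_iff]
  have := a.isLt; have := b.isLt
  omega

lemma adjCL {n : ℕ} (i : Fin n) (a b : Fin 2) :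
    (Gg n).Adj (.inl 0, a) (.inr i, b) := by
  left; simp

lemma adjCC {n : ℕ} : (Gg n).Adj (.inl 0, 0) (.inl 0, 1) := by
  right
  refine ⟨rfl, path2_adj.mpr ?_⟩
  show (0 : Fin 2) ≠ 1
  decide

lemma adjLL {n : ℕ} (i : Fin n) : (Gg n).Adj (.inr i, 0) (.inr i, 1) := by
  right
  refine ⟨rfl, path2_adj.mpr ?_⟩
  show (0 : Fin 2) ≠ 1
  decide

def crossLbl (r i : ℕ) (a b : Fin 2) : ℕ :=
  if a = 1 then (if b = 1 then r else i / r ^ 2 % r) else (if b = 1 then i / r % r else i % r)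

def Wlbl (r : ℕ) {n : ℕ} (p q : Vtx n) : ℕ :=
  match p, q with
  | (.inl _, a), (.inr i, b) => crossLbl r i.val a b
  | (.inr i, b), (.inl _, a) => crossLbl r i.val a b
  | (.inr i, _), (.inr j, _) => if i = j then i.val / r ^ 3 else 0
  | (.inl _, _), (.inl _, _) => 0

lemma Wlbl_symm (r : ℕ) {n : ℕ} (p q : Vtx n) : Wlbl r p q = Wlbl r q p := by
  rcases p with ⟨x | i, a⟩ <;> rcases q with ⟨y | j, b⟩ <;> simp only [Wlbl]
  rcases eq_or_ne i j with h | h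
  · subst h; simp
  · simp [h, h.symm]

-- computation lemmas
lemma W_C0_L0 (r n : ℕ) (i : Fin n) : Wlbl r ((.inl 0, 0) : Vtx n) (.inr i, 0) = i.val % r := by
  show crossLbl r i.val 0 0 = _
  unfold crossLbl
  rw [if_neg (by decide), if_neg (by decide)]

lemma W_C0_L1 (r n : ℕ) (i : Fin n) : Wlbl r ((.inl 0, 0) : Vtx n) (.inr i, 1) = i.val / r % r := by
  show crossLbl r i.val 0 1 = _
  unfold crossLbl
  rw [if_neg (by decide), if_pos rfl]

lemma W_C1_L0 (r n : ℕ) (i : Fin n) : Wlbl r ((.inl 0, 1) : Vtx n) (.inr i, 0) = i.val / r ^ 2 % r := by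
  show crossLbl r i.val 1 0 = _
  unfold crossLbl
  rw [if_pos rfl, if_neg (by decide)]

lemma W_C1_L1 (r n : ℕ) (i : Fin n) : Wlbl r ((.inl 0, 1) : Vtx n) (.inr i, 1) = r := by
  show crossLbl r i.val 1 1 = _
  unfold crossLbl
  rw [if_pos rfl, if_pos rfl]

lemma W_LL (r n : ℕ) (i : Fin n) (a b : Fin 2) :
    Wlbl r ((.inr i, a) : Vtx n) (.inr i, b) = i.val / r ^ 3 := by
  show (if i = i then i.val / r ^ 3 else 0) = _
  rw [if_pos rfl]

lemma Wlbl_le (r : ℕ) (hr : 0 < r) (p q : Vtx (r ^ 4)) : Wlbl r p q ≤ r := by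
  have hc : ∀ (i : ℕ) (a b : Fin 2), crossLbl r i a b ≤ r := by
    intro i a b
    unfold crossLbl
    have h1 := Nat.mod_lt (i / r ^ 2) hr
    have h2 := Nat.mod_lt (i / r) hr
    have h3 := Nat.mod_lt i hr
    split_ifs <;> omega
  have hf : ∀ i : Fin (r ^ 4), i.val / r ^ 3 < r := by
    intro i
    rw [Nat.div_lt_iff_lt_mul (by positivity)]
    have := i.isLt
    have : r * r ^ 3 = r ^ 4 := by ring
    omega
  rcases p with ⟨x | i, a⟩ <;> rcases q with ⟨y | j, b⟩ <;> simp only [Wlbl]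
  · omega
  · exact hc _ _ _
  · exact hc _ _ _
  · split_ifs with h
    · exact le_of_lt (hf i)
    · omega

lemma digit_inj {r i j : ℕ} (h0 : i % r = j % r) (h1 : i / r % r = j / r % r)
    (h2 : i / r ^ 2 % r = j / r ^ 2 % r) (h3 : i / r ^ 3 = j / r ^ 3) : i = j := by
  have unstep : ∀ a b : ℕ, a / r = b / r → a % r = b % r → a = b := by
    intro a b hd hm
    conv_lhs => rw [← Nat.div_add_mod a r]
    rw [hd, hm, Nat.div_add_mod]
  have e3 : i / r ^ 2 / r = j / r ^ 2 / r := by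
    rw [Nat.div_div_eq_div_mul, Nat.div_div_eq_div_mul, show r ^ 2 * r = r ^ 3 by ring]
    exact h3
  have d2 : i / r ^ 2 = j / r ^ 2 := unstep _ _ e3 h2
  have e2 : i / r / r = j / r / r := by
    rw [Nat.div_div_eq_div_mul, Nat.div_div_eq_div_mul, show r * r = r ^ 2 by ring]
    exact d2
  have d1 : i / r = j / r := unstep _ _ e2 h1
  exact unstep _ _ d1 h0

-- marker lemmas
lemma marker_src {r : ℕ} (hr : 2 ≤ r) {v x y : Vtx (r ^ 4)}
    (hx : Wlbl r v x = r) (hy : Wlbl r v y = r) (hxy : x ≠ y) : v = (.inl 0, 1) := by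
  have hr0 : 0 < r := by omega
  have hcross : ∀ (i : ℕ) (a b : Fin 2), crossLbl r i a b = r → a = 1 ∧ b = 1 := by
    intro i a b h
    unfold crossLbl at h
    have h1 := Nat.mod_lt (i / r ^ 2) hr0
    have h2 := Nat.mod_lt (i / r) hr0
    have h3 := Nat.mod_lt i hr0
    fin_cases a <;> fin_cases b <;> simp_all <;> omega
  have hf : ∀ i : Fin (r ^ 4), i.val / r ^ 3 < r := by
    intro i
    rw [Nat.div_lt_iff_lt_mul (by positivity)]
    have := i.isLt
    have : r * r ^ 3 = r ^ 4 := by ring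
    omega
  rcases v with ⟨c | i, a⟩
  · -- center: show a = 1
    have ha : a = 1 := by
      rcases x with ⟨y' | j, b⟩
      · simp only [Wlbl] at hx; omega
      · exact (hcross _ _ _ hx).1
    rw [ha, Subsingleton.elim c 0]
  · -- leaf: both x and y forced to be (inl 0, 1)
    exfalso
    have key : ∀ z : Vtx (r ^ 4), Wlbl r ((.inr i, a) : Vtx (r ^ 4)) z = r → z = (.inl 0, 1) := by
      intro z hz
      rcases z with ⟨c' | j, b⟩
      · have := (hcross _ _ _ hz).1
        rw [this, Subsingleton.elim c' 0]
      · simp only [Wlbl] at hz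
        split_ifs at hz with h
        · subst h; have := hf i; omega
        · omega
    exact hxy ((key x hx).trans (key y hy).symm)

lemma marker_tgt {r : ℕ} (hr : 2 ≤ r) {x : Vtx (r ^ 4)}
    (h : Wlbl r ((.inl 0, 1) : Vtx (r ^ 4)) x = r) : ∃ j, x = (.inr j, 1) := by
  have hr0 : 0 < r := by omega
  rcases x with ⟨c | j, b⟩
  · simp only [Wlbl] at h; omega
  · refine ⟨j, ?_⟩
    have hb : b = 1 := by
      simp only [Wlbl] at h
      unfold crossLbl at h
      have h1 := Nat.mod_lt (j.val / r ^ 2) hr0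
      fin_cases b <;> simp_all <;> omega
    rw [hb]

def swapIso {n : ℕ} (i j : Fin n) : Gg n ≃g Gg n where
  toEquiv := Equiv.prodCongr (Equiv.sumCongr (Equiv.refl (Fin 1)) (Equiv.swap i j))
    (Equiv.refl (Fin 2))
  map_rel_iff' := by
    intro p q
    rcases p with ⟨x | a, s⟩ <;> rcases q with ⟨y | b, t⟩ <;>
      simp only [Equiv.prodCongr_apply, Equiv.coe_refl, Prod.map, Equiv.sumCongr_apply,
        Sum.map_inl, Sum.map_inr, id_eq, id] <;>
      simp [lexProd, EmbeddingLike.apply_eq_iff_eq]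

lemma lower (r : ℕ) (hr2 : 2 ≤ r) (d : ℕ)
    (hd : ∃ ψ : (Gg (r ^ 4)).edgeSet → Fin d,
      ∀ σ : Gg (r ^ 4) ≃g Gg (r ^ 4), (∀ e, ψ (σ.mapEdgeSet e) = ψ e) → ∀ v, σ v = v) :
    2 ≤ d := by
  obtain ⟨ψ, hψ⟩ := hd
  by_contra hlt
  push_neg at hlt
  have hn1 : 1 < r ^ 4 := by
    have : 2 ^ 4 ≤ r ^ 4 := Nat.pow_le_pow_left hr2 4
    omega
  interval_cases d
  · exact (ψ ⟨s(((.inl 0, 0) : Vtx (r ^ 4)), (.inl 0, 1)), adjCC⟩).elim0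
  · set i : Fin (r ^ 4) := ⟨0, by omega⟩
    set j : Fin (r ^ 4) := ⟨1, by omega⟩
    have hall := hψ (swapIso i j) (fun e => Subsingleton.elim _ _) (.inr i, 0)
    have happ : (swapIso i j) (.inr i, 0) = ((.inr j, 0) : Vtx (r ^ 4)) := by
      simp [swapIso, Equiv.swap_apply_left]
    rw [happ] at hall
    simp [i, j, Prod.ext_iff, Fin.ext_iff] at hall

open Fin.NatCast in
lemma upper (r : ℕ) (hr2 : 2 ≤ r) :
    ∃ ψ : (Gg (r ^ 4)).edgeSet → Fin (r + 1),
      ∀ σ : Gg (r ^ 4) ≃g Gg (r ^ 4), (∀ e, ψ (σ.mapEdgeSet e) = ψ e) → ∀ v, σ v = v := by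
  have hr0 : 0 < r := by omega
  have hn1 : 1 < r ^ 4 := by
    have : 2 ^ 4 ≤ r ^ 4 := Nat.pow_le_pow_left hr2 4
    omega
  refine ⟨fun e => Sym2.lift ⟨fun p q => ((Wlbl r p q : ℕ) : Fin (r + 1)),
    fun p q => congrArg (fun t : ℕ => (t : Fin (r + 1))) (Wlbl_symm r p q)⟩ e.1, ?_⟩
  intro σ hσ
  have hinj : ∀ {x y : Vtx (r ^ 4)}, σ x = σ y → x = y := fun {x y} h =>
    σ.toEquiv.injective h
  have key : ∀ u v, (Gg (r ^ 4)).Adj u v → Wlbl r (σ u) (σ v) = Wlbl r u v := by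
    intro u v huv
    have h1 := hσ ⟨s(u, v), huv⟩
    have hval : ((σ.mapEdgeSet ⟨s(u, v), huv⟩ : (Gg (r ^ 4)).edgeSet) : Sym2 (Vtx (r ^ 4)))
        = Sym2.map σ s(u, v) := rfl
    simp only [hval, Sym2.map_pair_eq, Sym2.lift_mk] at h1
    have hlt1 : Wlbl r (σ u) (σ v) < r + 1 := Nat.lt_succ_of_le (Wlbl_le r hr0 _ _)
    have hlt2 : Wlbl r u v < r + 1 := Nat.lt_succ_of_le (Wlbl_le r hr0 _ _)
    have h2 := congrArg Fin.val h1
    rwa [Fin.val_cast_of_lt hlt1, Fin.val_cast_of_lt hlt2] at h2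
  set i0 : Fin (r ^ 4) := ⟨0, by omega⟩ with hi0
  set i1 : Fin (r ^ 4) := ⟨1, by omega⟩ with hi1
  -- σ fixes the center (inl 0, 1)
  have hC1 : σ (.inl 0, 1) = ((.inl 0, 1) : Vtx (r ^ 4)) := by
    have k1 := key _ _ (adjCL i0 1 1)
    have k2 := key _ _ (adjCL i1 1 1)
    rw [W_C1_L1] at k1 k2
    refine marker_src hr2 k1 k2 (fun he => ?_)
    have := hinj he
    simp [i0, i1, Prod.ext_iff, Fin.ext_iff] at this
  -- every (inr i, 1) goes to some (inr j, 1)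
  have hπ : ∀ i : Fin (r ^ 4), ∃ j, σ (.inr i, 1) = ((.inr j, 1) : Vtx (r ^ 4)) := by
    intro i
    have k := key _ _ (adjCL i 1 1)
    rw [W_C1_L1, hC1] at k
    exact marker_tgt hr2 k
  -- σ fixes the center (inl 0, 0)
  have hC0 : σ (.inl 0, 0) = ((.inl 0, 0) : Vtx (r ^ 4)) := by
    obtain ⟨j0, hj0⟩ := hπ i0
    obtain ⟨j1, hj1⟩ := hπ i1
    have hne : j0 ≠ j1 := by
      intro hj
      rw [hj] at hj0
      have := hinj (hj0.trans hj1.symm)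
      simp [i0, i1, Prod.ext_iff, Fin.ext_iff] at this
    rcases h' : σ (.inl 0, 0) with ⟨c | k, a⟩
    · rcases fin2 a with rfl | rfl
      · rw [Subsingleton.elim c 0]
      · exfalso
        have hccc : σ ((.inl 0, 0) : Vtx (r ^ 4)) = σ (.inl 0, 1) := by
          rw [h', hC1, Subsingleton.elim c 0]
        have := hinj hccc
        simp [Prod.ext_iff, Fin.ext_iff] at this
    · exfalso
      have hA0 : (Gg (r ^ 4)).Adj (σ (.inl 0, 0)) (σ (.inr i0, 1)) :=
        σ.map_rel_iff.mpr (adjCL i0 0 1)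
      have hA1 : (Gg (r ^ 4)).Adj (σ (.inl 0, 0)) (σ (.inr i1, 1)) :=
        σ.map_rel_iff.mpr (adjCL i1 0 1)
      rw [h', hj0] at hA0
      rw [h', hj1] at hA1
      have hk0 : k = j0 := by
        rcases hA0 with hA | ⟨hA, _⟩
        · simp at hA
        · exact Sum.inr.inj hA
      have hk1 : k = j1 := by
        rcases hA1 with hA | ⟨hA, _⟩
        · simp at hA
        · exact Sum.inr.inj hA
      exact hne (hk0 ▸ hk1)
  -- leaf bottoms follow leaf tops
  have hfix0 : ∀ i j : Fin (r ^ 4), σ (.inr i, 1) = ((.inr j, 1) : Vtx (r ^ 4)) →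
      σ (.inr i, 0) = ((.inr j, 0) : Vtx (r ^ 4)) := by
    intro i j hj
    have hA : (Gg (r ^ 4)).Adj (σ (.inr i, 0)) (.inr j, 1) := by
      have := σ.map_rel_iff.mpr (adjLL i)
      rwa [hj] at this
    rcases h' : σ (.inr i, 0) with ⟨c | k, a⟩
    · exfalso
      rcases fin2 a with rfl | rfl
      · have hccc : σ ((.inr i, 0) : Vtx (r ^ 4)) = σ (.inl 0, 0) := by
          rw [h', hC0, Subsingleton.elim c 0]
        have := hinj hccc
        simp at this
      · have hccc : σ ((.inr i, 0) : Vtx (r ^ 4)) = σ (.inl 0, 1) := by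
          rw [h', hC1, Subsingleton.elim c 0]
        have := hinj hccc
        simp at this
    · rw [h'] at hA
      rcases hA with hA | ⟨hk, ha⟩
      · simp at hA
      · have hk' : k = j := Sum.inr.inj hk
        have ha' : a = 0 := by
          have h2 := path2_adj.mp ha
          rcases fin2 a with rfl | rfl
          · rfl
          · exact absurd rfl h2
        rw [hk', ha']
  -- σ fixes every leaf
  have hfix : ∀ (i : Fin (r ^ 4)) (b : Fin 2), σ (.inr i, b) = ((.inr i, b) : Vtx (r ^ 4)) := by
    intro i b
    obtain ⟨j, hj⟩ := hπ i
    have hj0 := hfix0 i j hj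
    have k00 := key _ _ (adjCL i 0 0)
    rw [hC0, hj0, W_C0_L0, W_C0_L0] at k00
    have k01 := key _ _ (adjCL i 0 1)
    rw [hC0, hj, W_C0_L1, W_C0_L1] at k01
    have k10 := key _ _ (adjCL i 1 0)
    rw [hC1, hj0, W_C1_L0, W_C1_L0] at k10
    have kLL := key _ _ (adjLL i)
    rw [hj0, hj, W_LL, W_LL] at kLL
    have hval : j.val = i.val := digit_inj k00 k01 k10 kLL
    have hij : j = i := Fin.ext hval
    subst hij
    rcases fin2 b with rfl | rfl
    · exact hj0
    · exact hj
  intro v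
  rcases v with ⟨c | i, b⟩
  · obtain rfl : c = 0 := Subsingleton.elim c 0
    rcases fin2 b with rfl | rfl
    · exact hC0
    · exact hC1
  · exact hfix i b

end Stmt13Aux

theorem stmt13 (n r : ℕ) (hn : 2 ≤ n) (hr : 1 ≤ r) (h : n = r ^ 4) :
    2 ≤ distinguishingIndex
        (lexProd (completeBipartiteGraph (Fin 1) (Fin n)) (SimpleGraph.pathGraph 2)) ∧
    distinguishingIndex
        (lexProd (completeBipartiteGraph (Fin 1) (Fin n)) (SimpleGraph.pathGraph 2)) ≤
      r + 1 := by
  subst h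
  have hr2 : 2 ≤ r := by
    by_contra h'
    push_neg at h'
    interval_cases r <;> simp_all
  have hmem : (r + 1) ∈ {d : ℕ | ∃ ψ : (Stmt13Aux.Gg (r ^ 4)).edgeSet → Fin d,
      ∀ σ : Stmt13Aux.Gg (r ^ 4) ≃g Stmt13Aux.Gg (r ^ 4),
        (∀ e, ψ (σ.mapEdgeSet e) = ψ e) → ∀ v, σ v = v} :=
    Stmt13Aux.upper r hr2
  constructor
  · exact Stmt13Aux.lower r hr2 _ (Nat.sInf_mem ⟨_, hmem⟩)
  · exact Nat.sInf_le hmem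
end

section
/- Let G be a connected simple graph such that every automorphism of G[G] is of wreath form. Then D'(G[G]) ≤ 2. -/
open SimpleGraph

open SimpleGraph Finset

private lemma fin2_ite_eq_iff {P Q : Prop} [Decidable P] [Decidable Q]
    (h : (if P then (1 : Fin 2) else 0) = (if Q then 1 else 0)) : P ↔ Q := by
  by_cases hP : P <;> by_cases hQ : Q <;> simp [hP, hQ] at h ⊢

private lemma count_le (n : ℕ) (t : Fin n) :
    (Finset.univ.filter fun b : Fin n => (b : ℕ) ≤ (t : ℕ)).card = (t : ℕ) + 1 := by
  have h : (Finset.univ.filter fun b : Fin n => (b : ℕ) ≤ (t : ℕ)) = Finset.Iic t := by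
    ext b
    simp only [Finset.mem_filter, Finset.mem_univ, true_and, Finset.mem_Iic, Fin.le_def]
  rw [h, Fin.card_Iic]

private lemma count_ge (n : ℕ) (t : Fin n) :
    (Finset.univ.filter fun b : Fin n => (t : ℕ) ≤ (b : ℕ)).card = n - (t : ℕ) := by
  have h : (Finset.univ.filter fun b : Fin n => (t : ℕ) ≤ (b : ℕ)) = Finset.Ici t := by
    ext b
    simp only [Finset.mem_filter, Finset.mem_univ, true_and, Finset.mem_Ici, Fin.le_def]
  rw [h, Fin.card_Ici]

private lemma count_lt (m k : ℕ) (hk : k ≤ m) :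
    (Finset.univ.filter fun i : Fin m => (i : ℕ) < k).card = k := by
  rcases Nat.lt_or_ge k m with h | h
  · have he : (Finset.univ.filter fun i : Fin m => (i : ℕ) < k) = Finset.Iio ⟨k, h⟩ := by
      ext b
      simp only [Finset.mem_filter, Finset.mem_univ, true_and, Finset.mem_Iio, Fin.lt_def]
    rw [he, Fin.card_Iio]
  · have hkm : k = m := le_antisymm hk h
    have he : (Finset.univ.filter fun i : Fin m => (i : ℕ) < k) = Finset.univ := by
      ext b
      simp only [Finset.mem_filter, Finset.mem_univ, true_and, iff_true]
      have := b.isLt; omega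
    rw [he, Finset.card_univ, Fintype.card_fin, hkm]

private lemma edge_bound {V : Type*} [Fintype V] (G : SimpleGraph V) [Fintype G.edgeSet]
    (hG : G.Connected) : Fintype.card V ≤ Fintype.card G.edgeSet + 1 := by
  classical
  obtain ⟨r⟩ := hG.nonempty
  have H : ∀ v : V, v ≠ r → ∃ w, G.Adj v w ∧ G.dist w r < G.dist v r := by
    intro v hv
    obtain ⟨p, hp⟩ := (hG v r).exists_walk_length_eq_dist
    cases p with
    | nil => exact absurd rfl hv
    | cons h q =>
      refine ⟨_, h, ?_⟩
      have h2 := SimpleGraph.dist_le q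
      simp only [SimpleGraph.Walk.length_cons] at hp
      omega
  choose w hw1 hw2 using H
  let φ : {v : V // v ≠ r} → G.edgeSet := fun v =>
    ⟨s(v.1, w v.1 v.2), (SimpleGraph.mem_edgeSet G).mpr (hw1 v.1 v.2)⟩
  have hinj : Function.Injective φ := by
    rintro ⟨v1, h1⟩ ⟨v2, h2⟩ hEq
    have hEq' : s(v1, w v1 h1) = s(v2, w v2 h2) := congrArg Subtype.val hEq
    rcases Sym2.eq_iff.mp hEq' with ⟨hv, -⟩ | ⟨hvw, hwv⟩
    · exact Subtype.ext hv
    · exfalso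
      have a1 := hw2 v1 h1
      have a2 := hw2 v2 h2
      rw [hwv] at a1
      rw [← hvw] at a2
      omega
  have hcard := Fintype.card_le_of_injective φ hinj
  have hsub : Fintype.card {v : V // v ≠ r} = Fintype.card V - 1 := by
    have h1 : Fintype.card {v : V // ¬ (v = r)} = Fintype.card V - Fintype.card {v : V // v = r} :=
      Fintype.card_subtype_compl _
    rw [Fintype.card_subtype_eq] at h1
    convert h1 using 2
  have hpos : 0 < Fintype.card V := Fintype.card_pos_iff.mpr ⟨r⟩
  omega

private def colf {V : Type*} [DecidableEq V] (G : SimpleGraph V) [DecidableRel G.Adj] {n m : ℕ}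
    (e : V ≃ Fin n) (ι : G.edgeSet ≃ Fin m) : V × V → V × V → Fin 2 := fun p q =>
  if _hg : p.1 = q.1 then
    (if h : G.Adj p.2 q.2 then
      (if ((ι ⟨s(p.2, q.2), (SimpleGraph.mem_edgeSet G).mpr h⟩ : Fin m) : ℕ) < (e p.1 : ℕ)
        then 1 else 0)
    else 0)
  else if (e p.1 : ℕ) < (e q.1 : ℕ) then
    (if (e q.2 : ℕ) ≤ (e p.2 : ℕ) then 1 else 0)
  else
    (if (e p.2 : ℕ) ≤ (e q.2 : ℕ) then 1 else 0)

private lemma colf_symm {V : Type*} [DecidableEq V] (G : SimpleGraph V) [DecidableRel G.Adj] {n m : ℕ}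
    (e : V ≃ Fin n) (ι : G.edgeSet ≃ Fin m) (p q : V × V) :
    colf G e ι p q = colf G e ι q p := by
  unfold colf
  by_cases h1 : p.1 = q.1
  · rw [dif_pos h1, dif_pos h1.symm]
    by_cases h : G.Adj p.2 q.2
    · rw [dif_pos h, dif_pos h.symm]
      have hss : (⟨s(q.2, p.2), (SimpleGraph.mem_edgeSet G).mpr h.symm⟩ : G.edgeSet)
          = ⟨s(p.2, q.2), (SimpleGraph.mem_edgeSet G).mpr h⟩ := Subtype.ext (Sym2.eq_swap)
      rw [hss, h1]
    · rw [dif_neg h, dif_neg fun h' => h h'.symm]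
  · rw [dif_neg h1, dif_neg (Ne.symm h1)]
    have hne : (e p.1 : ℕ) ≠ (e q.1 : ℕ) := fun hc => h1 (e.injective (Fin.ext hc))
    rcases lt_or_gt_of_ne hne with hlt | hgt
    · rw [if_pos hlt, if_neg (show ¬ ((e q.1 : ℕ) < (e p.1 : ℕ)) from by omega)]
    · rw [if_neg (show ¬ ((e p.1 : ℕ) < (e q.1 : ℕ)) from by omega), if_pos hgt]
theorem stmt17 {V : Type*} [Fintype V] (G : SimpleGraph V)
    (hG : G.Connected) (hw : wreathForm G G) :
    distinguishingIndex (lexProd G G) ≤ 2 := by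
  classical
  apply Nat.sInf_le
  by_cases hV : Fintype.card V ≤ 1
  · haveI : Subsingleton V := Fintype.card_le_one_iff_subsingleton.mp hV
    exact ⟨fun _ => 0, fun σ _ v => Subsingleton.elim _ _⟩
  · have hn2 : 1 < Fintype.card V := lt_of_not_ge hV
    haveI hdA : DecidableRel G.Adj := fun a b => Classical.dec _
    set n := Fintype.card V with hn
    let e : V ≃ Fin n := Fintype.equivFin V
    set m := Fintype.card G.edgeSet with hm
    let ι : G.edgeSet ≃ Fin m := Fintype.equivFin _
    have hnm : n ≤ m + 1 := edge_bound G hG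
    -- evaluation lemmas for colf
    have colf_int : ∀ (g x y : V) (h : G.Adj x y),
        colf G e ι (g, x) (g, y)
          = (if ((ι ⟨s(x, y), (SimpleGraph.mem_edgeSet G).mpr h⟩ : Fin m) : ℕ) < (e g : ℕ)
              then 1 else 0) := by
      intro g x y h
      unfold colf
      rw [dif_pos rfl, dif_pos h]
    have colf_cross_lt : ∀ (g g' x y : V), g ≠ g' → ((e g : ℕ) < (e g' : ℕ)) →
        colf G e ι (g, x) (g', y) = (if (e y : ℕ) ≤ (e x : ℕ) then 1 else 0) := by
      intro g g' x y h1 hlt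
      unfold colf
      rw [dif_neg h1, if_pos hlt]
    have colf_cross_gt : ∀ (g g' x y : V), g ≠ g' → ((e g' : ℕ) < (e g : ℕ)) →
        colf G e ι (g, x) (g', y) = (if (e x : ℕ) ≤ (e y : ℕ) then 1 else 0) := by
      intro g g' x y h1 hgt
      unfold colf
      rw [dif_neg h1, if_neg (show ¬ ((e g : ℕ) < (e g' : ℕ)) from by omega)]
    refine ⟨fun ε => Sym2.lift ⟨colf G e ι, colf_symm G e ι⟩ ε.val, ?_⟩
    intro σ hσ
    have key : ∀ p q, (lexProd G G).Adj p q →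
        colf G e ι (σ p) (σ q) = colf G e ι p q := by
      intro p q hpq
      have h2 := hσ ⟨s(p, q), hpq⟩
      simpa [SimpleGraph.Iso.mapEdgeSet, SimpleGraph.Hom.mapEdgeSet, Sym2.map_pair_eq] using h2
    obtain ⟨α, β, hfb⟩ := hw σ
    have hfb' : ∀ (a c : V), σ (a, c) = (α a, β (α a) c) := fun a c => hfb (a, c)
    -- counting lemma for edges
    have hcnt : ∀ k : ℕ, k ≤ m →
        (Finset.univ.filter fun ε : G.edgeSet => ((ι ε : Fin m) : ℕ) < k).card = k := by
      intro k hk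
      refine (Finset.card_equiv ι ?_).trans (count_lt m k hk)
      intro ε
      simp only [Finset.mem_filter, Finset.mem_univ, true_and]
    -- Step A : α is the identity
    have hα : ∀ g, α g = g := by
      intro g
      have hint : ∀ ε : G.edgeSet,
          (((ι ((β (α g)).mapEdgeSet ε) : Fin m) : ℕ) < (e (α g) : ℕ))
            ↔ (((ι ε : Fin m) : ℕ) < (e g : ℕ)) := by
        rintro ⟨se, hse⟩
        induction se using Sym2.ind with
        | _ x y =>
          have hxy : G.Adj x y := (SimpleGraph.mem_edgeSet G).mp hse
          have hb : G.Adj (β (α g) x) (β (α g) y) := ((β (α g)).map_adj_iff).mpr hxy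
          have hk := key (g, x) (g, y) (Or.inr ⟨rfl, hxy⟩)
          rw [hfb' g x, hfb' g y] at hk
          rw [colf_int (α g) _ _ hb, colf_int g _ _ hxy] at hk
          have hiff := fin2_ite_eq_iff hk
          have hmap : (β (α g)).mapEdgeSet ⟨s(x, y), hse⟩
              = ⟨s(β (α g) x, β (α g) y), (SimpleGraph.mem_edgeSet G).mpr hb⟩ := by
            apply Subtype.ext
            simp [SimpleGraph.Iso.mapEdgeSet, SimpleGraph.Hom.mapEdgeSet, Sym2.map_pair_eq]
          rw [hmap]
          exact hiff
      have hle1 : (e (α g) : ℕ) ≤ m := by have := (e (α g)).isLt; omega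
      have hle2 : (e g : ℕ) ≤ m := by have := (e g).isLt; omega
      have heq : (Finset.univ.filter fun ε : G.edgeSet => ((ι ε : Fin m) : ℕ) < (e g : ℕ)).card
          = (Finset.univ.filter fun ε : G.edgeSet =>
              ((ι ε : Fin m) : ℕ) < (e (α g) : ℕ)).card := by
        apply Finset.card_equiv ((β (α g)).mapEdgeSet)
        intro ε
        simp only [Finset.mem_filter, Finset.mem_univ, true_and]
        exact (hint ε).symm
      rw [hcnt _ hle2, hcnt _ hle1] at heq
      exact e.injective (Fin.ext heq.symm)
    -- Step B : each β g is the identity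
    have hβ : ∀ g x, β g x = x := by
      intro g
      haveI : Nontrivial V := Fintype.one_lt_card_iff_nontrivial.mp hn2
      obtain ⟨g'', hne⟩ := exists_ne g
      obtain ⟨p⟩ := hG.preconnected g g''
      obtain ⟨g', hadj⟩ : ∃ g', G.Adj g g' := by
        cases p with
        | nil => exact absurd rfl hne
        | cons h _ => exact ⟨_, h⟩
      have hgg' : g ≠ g' := G.ne_of_adj hadj
      have hcross : ∀ x y : V,
          colf G e ι (g, β g x) (g', β g' y) = colf G e ι (g, x) (g', y) := by
        intro x y
        have hk := key (g, x) (g', y) (Or.inl hadj)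
        rw [hfb' g x, hfb' g' y, hα g, hα g'] at hk
        exact hk
      have hene : (e g : ℕ) ≠ (e g' : ℕ) := fun hc => hgg' (e.injective (Fin.ext hc))
      intro x
      rcases lt_or_gt_of_ne hene with hlt | hgt
      · have hiff : ∀ y : V,
            ((e (β g' y) : ℕ) ≤ (e (β g x) : ℕ)) ↔ ((e y : ℕ) ≤ (e x : ℕ)) := by
          intro y
          have hk := hcross x y
          rw [colf_cross_lt g g' _ _ hgg' hlt, colf_cross_lt g g' _ _ hgg' hlt] at hk
          exact fin2_ite_eq_iff hk
        have c1 : (Finset.univ.filter fun y : V =>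
            (e (β g' y) : ℕ) ≤ (e (β g x) : ℕ)).card = (e (β g x) : ℕ) + 1 := by
          refine (Finset.card_equiv ((β g').toEquiv.trans e) ?_).trans (count_le n (e (β g x)))
          intro y
          simp only [Finset.mem_filter, Finset.mem_univ, true_and, Equiv.trans_apply,
            RelIso.coe_fn_toEquiv]
        have c2 : (Finset.univ.filter fun y : V =>
            (e y : ℕ) ≤ (e x : ℕ)).card = (e x : ℕ) + 1 := by
          refine (Finset.card_equiv e ?_).trans (count_le n (e x))
          intro y
          simp only [Finset.mem_filter, Finset.mem_univ, true_and]
        have c3 : (Finset.univ.filter fun y : V => (e (β g' y) : ℕ) ≤ (e (β g x) : ℕ))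
            = (Finset.univ.filter fun y : V => (e y : ℕ) ≤ (e x : ℕ)) :=
          Finset.filter_congr fun y _ => hiff y
        have h4 : (e (β g x) : ℕ) + 1 = (e x : ℕ) + 1 := by rw [← c1, c3, c2]
        exact e.injective (Fin.ext (by omega))
      · have hiff : ∀ y : V,
            ((e (β g x) : ℕ) ≤ (e (β g' y) : ℕ)) ↔ ((e x : ℕ) ≤ (e y : ℕ)) := by
          intro y
          have hk := hcross x y
          rw [colf_cross_gt g g' _ _ hgg' hgt, colf_cross_gt g g' _ _ hgg' hgt] at hk
          exact fin2_ite_eq_iff hk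
        have c1 : (Finset.univ.filter fun y : V =>
            (e (β g x) : ℕ) ≤ (e (β g' y) : ℕ)).card = n - (e (β g x) : ℕ) := by
          refine (Finset.card_equiv ((β g').toEquiv.trans e) ?_).trans (count_ge n (e (β g x)))
          intro y
          simp only [Finset.mem_filter, Finset.mem_univ, true_and, Equiv.trans_apply,
            RelIso.coe_fn_toEquiv]
        have c2 : (Finset.univ.filter fun y : V =>
            (e x : ℕ) ≤ (e y : ℕ)).card = n - (e x : ℕ) := by
          refine (Finset.card_equiv e ?_).trans (count_ge n (e x))
          intro y
          simp only [Finset.mem_filter, Finset.mem_univ, true_and]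
        have c3 : (Finset.univ.filter fun y : V => (e (β g x) : ℕ) ≤ (e (β g' y) : ℕ))
            = (Finset.univ.filter fun y : V => (e x : ℕ) ≤ (e y : ℕ)) :=
          Finset.filter_congr fun y _ => hiff y
        have h4 : n - (e (β g x) : ℕ) = n - (e x : ℕ) := by rw [← c1, c3, c2]
        have i1 := (e (β g x)).isLt
        have i2 := (e x).isLt
        exact e.injective (Fin.ext (by omega))
    intro v
    have hv := hfb v
    rw [hα v.1, hβ v.1 v.2] at hv
    rw [hv]
end
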